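/- arXiv:2407.19602 — 7 statements merged into one kernel-verified Lean document; each statement's English description precedes it below -/
import Mathlib

section
/- Let c > 0, Δ ∈ ℝ, and for ψ > max(0, Δ) define E(ψ) = 𝔼[min(1, c·((ψ-Δ)/ψ)^S)] where S ~ Poisson(ψ). Then E is nondecreasing in ψ, i.e., dE/dψ ≥ 0. -/
open Set Filter Finset

namespace Stmt0Aux

noncomputable def S (k : ℕ) (x : ℝ) : ℝ := ∑ s ∈ Finset.range k, ((s.factorial : ℝ))⁻¹ * x ^ s

lemma summable_aux (x : ℝ) : Summable (fun s : ℕ => ((s.factorial : ℝ))⁻¹ * x ^ s) :=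
  (Real.summable_pow_div_factorial x).congr fun s => by
    rw [div_eq_mul_inv, mul_comm]

lemma exp_eq (x : ℝ) : Real.exp x = ∑' s : ℕ, ((s.factorial : ℝ))⁻¹ * x ^ s := by
  rw [Real.exp_eq_exp_ℝ, NormedSpace.exp_eq_tsum_div]
  exact tsum_congr fun s => by rw [div_eq_mul_inv, mul_comm]

lemma tail_eq (x : ℝ) (k : ℕ) :
    ∑' i : ℕ, (((i + k).factorial : ℝ))⁻¹ * x ^ (i + k) = Real.exp x - S k x := by
  have h := Summable.sum_add_tsum_nat_add (f := fun s : ℕ => ((s.factorial : ℝ))⁻¹ * x ^ s) k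
    (summable_aux x)
  rw [← exp_eq] at h
  have h2 : S k x = ∑ s ∈ Finset.range k, ((s.factorial : ℝ))⁻¹ * x ^ s := rfl
  linarith [h]

lemma S_succ_sub (k : ℕ) (x : ℝ) : S (k + 1) x - S k x = ((k.factorial : ℝ))⁻¹ * x ^ k := by
  simp [S, Finset.sum_range_succ]

lemma hasDerivAt_S (k : ℕ) (x : ℝ) : HasDerivAt (S k) (S (k - 1) x) x := by
  have h : HasDerivAt (fun y => ∑ s ∈ Finset.range k, ((s.factorial : ℝ))⁻¹ * y ^ s)
      (∑ s ∈ Finset.range k, ((s.factorial : ℝ))⁻¹ * ((s : ℝ) * x ^ (s - 1))) x := by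
    apply HasDerivAt.fun_sum
    intro s _
    exact (hasDerivAt_pow s x).const_mul _
  convert h using 1
  · rfl
  cases k with
  | zero => simp [S]
  | succ n =>
    rw [Finset.sum_range_succ']
    simp only [Nat.succ_sub_one, S]
    rw [show ((Nat.factorial 0 : ℕ) : ℝ)⁻¹ * ((0 : ℕ) * x ^ (0 - 1)) = 0 by norm_num]
    rw [add_zero]
    apply Finset.sum_congr rfl
    intro i _
    have hne : ((i.factorial : ℕ) : ℝ) ≠ 0 := Nat.cast_ne_zero.2 i.factorial_ne_zero
    have hne2 : ((i : ℝ) + 1) ≠ 0 := by positivity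
    rw [Nat.factorial_succ]
    push_cast
    field_simp


noncomputable def G (c Δ : ℝ) (k : ℕ) (ψ : ℝ) : ℝ :=
  Real.exp (-ψ) * (S k ψ + c * (Real.exp (ψ - Δ) - S k (ψ - Δ)))

noncomputable def H (c Δ : ℝ) (k : ℕ) (ψ : ℝ) : ℝ :=
  Real.exp (-ψ) * (c * S k (ψ - Δ) + (Real.exp ψ - S k ψ))

noncomputable def gd (c Δ : ℝ) (k : ℕ) (ψ : ℝ) : ℝ :=
  Real.exp (-ψ) * (c * (S k (ψ - Δ) - S (k - 1) (ψ - Δ)) - (S k ψ - S (k - 1) ψ))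

noncomputable def hd (c Δ : ℝ) (k : ℕ) (ψ : ℝ) : ℝ :=
  Real.exp (-ψ) * ((S k ψ - S (k - 1) ψ) - c * (S k (ψ - Δ) - S (k - 1) (ψ - Δ)))

lemma hd_exp (ψ : ℝ) : HasDerivAt (fun ψ : ℝ => Real.exp (-ψ)) (-Real.exp (-ψ)) ψ := by
  simpa using (hasDerivAt_neg ψ).exp

lemma hd_sub (Δ ψ : ℝ) : HasDerivAt (fun ψ : ℝ => ψ - Δ) 1 ψ := (hasDerivAt_id ψ).sub_const Δ

lemma hd_S2 (Δ : ℝ) (k : ℕ) (ψ : ℝ) :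
    HasDerivAt (fun ψ : ℝ => S k (ψ - Δ)) (S (k - 1) (ψ - Δ)) ψ := by
  have := (hasDerivAt_S k (ψ - Δ)).comp ψ (hd_sub Δ ψ)
  rw [mul_one] at this
  exact this

lemma hd_exp2 (Δ : ℝ) (ψ : ℝ) :
    HasDerivAt (fun ψ : ℝ => Real.exp (ψ - Δ)) (Real.exp (ψ - Δ)) ψ := by
  simpa using (hd_sub Δ ψ).exp

lemma hasDerivAt_G (c Δ : ℝ) (k : ℕ) (ψ : ℝ) : HasDerivAt (G c Δ k) (gd c Δ k ψ) ψ := by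
  have inner : HasDerivAt (fun ψ => S k ψ + c * (Real.exp (ψ - Δ) - S k (ψ - Δ)))
      (S (k - 1) ψ + c * (Real.exp (ψ - Δ) - S (k - 1) (ψ - Δ))) ψ :=
    (hasDerivAt_S k ψ).add (((hd_exp2 Δ ψ).sub (hd_S2 Δ k ψ)).const_mul c)
  have := (hd_exp ψ).mul inner
  refine this.congr_deriv ?_
  unfold gd
  ring

lemma hasDerivAt_H (c Δ : ℝ) (k : ℕ) (ψ : ℝ) : HasDerivAt (H c Δ k) (hd c Δ k ψ) ψ := by
  have inner : HasDerivAt (fun ψ => c * S k (ψ - Δ) + (Real.exp ψ - S k ψ))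
      (c * S (k - 1) (ψ - Δ) + (Real.exp ψ - S (k - 1) ψ)) ψ :=
    ((hd_S2 Δ k ψ).const_mul c).add ((Real.hasDerivAt_exp ψ).sub (hasDerivAt_S k ψ))
  have := (hd_exp ψ).mul inner
  refine this.congr_deriv ?_
  unfold hd
  ring

lemma gd_nonneg {c Δ : ℝ} {k : ℕ} {ψ : ℝ}
    (pat1 : ∀ s < k, ψ ^ s ≤ c * (ψ - Δ) ^ s) : 0 ≤ gd c Δ k ψ := by
  cases k with
  | zero => simp [gd]
  | succ m =>
    have h := pat1 m (Nat.lt_succ_self m)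
    have hinv : (0 : ℝ) ≤ ((m.factorial : ℝ))⁻¹ := by positivity
    unfold gd
    rw [Nat.succ_sub_one, S_succ_sub, S_succ_sub]
    apply mul_nonneg (Real.exp_pos _).le
    nlinarith [mul_le_mul_of_nonneg_left h hinv]

lemma hd_nonneg {c Δ : ℝ} {k : ℕ} {ψ : ℝ}
    (pat1 : ∀ s < k, c * (ψ - Δ) ^ s ≤ ψ ^ s) : 0 ≤ hd c Δ k ψ := by
  cases k with
  | zero => simp [hd]
  | succ m =>
    have h := pat1 m (Nat.lt_succ_self m)
    have hinv : (0 : ℝ) ≤ ((m.factorial : ℝ))⁻¹ := by positivity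
    unfold hd
    rw [Nat.succ_sub_one, S_succ_sub, S_succ_sub]
    apply mul_nonneg (Real.exp_pos _).le
    nlinarith [mul_le_mul_of_nonneg_left h hinv]

lemma summable_min {c Δ ψ : ℝ} (hc : 0 < c) (hψ0 : 0 < ψ) (hψΔ : 0 < ψ - Δ) :
    Summable (fun s : ℕ => ((s.factorial : ℝ))⁻¹ * min (ψ ^ s) (c * (ψ - Δ) ^ s)) := by
  apply Summable.of_nonneg_of_le _ _ (summable_aux ψ)
  · intro s
    apply mul_nonneg (by positivity)
    exact le_min (by positivity) (by positivity)
  · intro s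
    exact mul_le_mul_of_nonneg_left (min_le_left _ _) (by positivity)

lemma repA {c Δ ψ : ℝ} {k : ℕ} (hc : 0 < c) (hψ0 : 0 < ψ) (hψΔ : 0 < ψ - Δ)
    (pat1 : ∀ s < k, ψ ^ s ≤ c * (ψ - Δ) ^ s)
    (pat2 : ∀ s, k ≤ s → c * (ψ - Δ) ^ s ≤ ψ ^ s) :
    Real.exp (-ψ) * ∑' s : ℕ, ((s.factorial : ℝ))⁻¹ * min (ψ ^ s) (c * (ψ - Δ) ^ s)
      = G c Δ k ψ := by
  have hsum := summable_min hc hψ0 hψΔ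
  rw [← Summable.sum_add_tsum_nat_add k hsum]
  have e1 : ∑ s ∈ Finset.range k, ((s.factorial : ℝ))⁻¹ * min (ψ ^ s) (c * (ψ - Δ) ^ s)
      = S k ψ :=
    Finset.sum_congr rfl fun s hs => by
      rw [min_eq_left (pat1 s (Finset.mem_range.1 hs))]
  have e2 : ∑' i : ℕ, (((i + k).factorial : ℝ))⁻¹ * min (ψ ^ (i + k)) (c * (ψ - Δ) ^ (i + k))
      = c * (Real.exp (ψ - Δ) - S k (ψ - Δ)) := by
    rw [← tail_eq (ψ - Δ) k, ← tsum_mul_left]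
    exact tsum_congr fun i => by
      rw [min_eq_right (pat2 (i + k) (Nat.le_add_left k i))]; ring
  rw [e1, e2, G]

lemma repB {c Δ ψ : ℝ} {k : ℕ} (hc : 0 < c) (hψ0 : 0 < ψ) (hψΔ : 0 < ψ - Δ)
    (pat1 : ∀ s < k, c * (ψ - Δ) ^ s ≤ ψ ^ s)
    (pat2 : ∀ s, k ≤ s → ψ ^ s ≤ c * (ψ - Δ) ^ s) :
    Real.exp (-ψ) * ∑' s : ℕ, ((s.factorial : ℝ))⁻¹ * min (ψ ^ s) (c * (ψ - Δ) ^ s)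
      = H c Δ k ψ := by
  have hsum := summable_min hc hψ0 hψΔ
  rw [← Summable.sum_add_tsum_nat_add k hsum]
  have e1 : ∑ s ∈ Finset.range k, ((s.factorial : ℝ))⁻¹ * min (ψ ^ s) (c * (ψ - Δ) ^ s)
      = c * S k (ψ - Δ) := by
    rw [S, Finset.mul_sum]
    exact Finset.sum_congr rfl fun s hs => by
      rw [min_eq_right (pat1 s (Finset.mem_range.1 hs))]; ring
  have e2 : ∑' i : ℕ, (((i + k).factorial : ℝ))⁻¹ * min (ψ ^ (i + k)) (c * (ψ - Δ) ^ (i + k))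
      = Real.exp ψ - S k ψ := by
    rw [← tail_eq ψ k]
    exact tsum_congr fun i => by
      rw [min_eq_left (pat2 (i + k) (Nat.le_add_left k i))]
  rw [e1, e2, H]

lemma transportA {c Δ x ψ : ℝ} (hΔ : 0 ≤ Δ) (hxΔ : 0 < x - Δ) (hx0 : 0 < x) (hxψ : x ≤ ψ)
    {s : ℕ} (h : x ^ s ≤ c * (x - Δ) ^ s) : ψ ^ s ≤ c * (ψ - Δ) ^ s := by
  have hψ0 : 0 < ψ := lt_of_lt_of_le hx0 hxψ
  have hψΔ : 0 < ψ - Δ := by linarith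
  have h1 : ψ * (x - Δ) ≤ x * (ψ - Δ) := by nlinarith
  have h2 : (ψ * (x - Δ)) ^ s ≤ (x * (ψ - Δ)) ^ s :=
    pow_le_pow_left₀ (by positivity) h1 s
  rw [mul_pow, mul_pow] at h2
  have h4 : x ^ s * (ψ - Δ) ^ s ≤ (c * (x - Δ) ^ s) * (ψ - Δ) ^ s :=
    mul_le_mul_of_nonneg_right h (by positivity)
  have h5 : ψ ^ s * (x - Δ) ^ s ≤ (c * (ψ - Δ) ^ s) * (x - Δ) ^ s := by nlinarith
  exact le_of_mul_le_mul_right h5 (by positivity)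

lemma transportB {c Δ x ψ : ℝ} (hc : 0 < c) (hΔ : Δ ≤ 0) (hx0 : 0 < x) (hxψ : x ≤ ψ)
    {s : ℕ} (h : c * (x - Δ) ^ s ≤ x ^ s) : c * (ψ - Δ) ^ s ≤ ψ ^ s := by
  have hψ0 : 0 < ψ := by linarith
  have hψΔ : 0 < ψ - Δ := by linarith
  have hxΔ : 0 < x - Δ := by linarith
  have h1 : x * (ψ - Δ) ≤ ψ * (x - Δ) := by nlinarith
  have h2 : (x * (ψ - Δ)) ^ s ≤ (ψ * (x - Δ)) ^ s :=
    pow_le_pow_left₀ (by positivity) h1 s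
  rw [mul_pow, mul_pow] at h2
  have h3 := mul_le_mul_of_nonneg_left h2 hc.le
  have h4 : (c * (x - Δ) ^ s) * ψ ^ s ≤ x ^ s * ψ ^ s :=
    mul_le_mul_of_nonneg_right h (by positivity)
  have h5 : (c * (ψ - Δ) ^ s) * x ^ s ≤ ψ ^ s * x ^ s := by nlinarith
  exact le_of_mul_le_mul_right h5 (by positivity)


lemma key (c Δ : ℝ) (hc : 0 < c) {x : ℝ} (hx : max 0 Δ < x) :
    ∃ d : ℝ, 0 ≤ d ∧ HasDerivWithinAt (fun ψ : ℝ =>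
      Real.exp (-ψ) * ∑' s : ℕ, ((s.factorial : ℝ))⁻¹ * min (ψ ^ s) (c * (ψ - Δ) ^ s))
      d (Ici x) x := by
  have hx0 : 0 < x := lt_of_le_of_lt (le_max_left _ _) hx
  have hxΔ' : Δ < x := lt_of_le_of_lt (le_max_right _ _) hx
  have hxΔ : 0 < x - Δ := by linarith
  rcases le_total 0 Δ with hΔ | hΔ
  · by_cases hall : ∀ s : ℕ, x ^ s ≤ c * (x - Δ) ^ s
    · refine ⟨hd c Δ 0 x, hd_nonneg (fun s hs => absurd hs (Nat.not_lt_zero s)), ?_⟩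
      have heq : Set.EqOn (fun ψ : ℝ =>
          Real.exp (-ψ) * ∑' s : ℕ, ((s.factorial : ℝ))⁻¹ * min (ψ ^ s) (c * (ψ - Δ) ^ s))
          (H c Δ 0) (Ici x) := by
        intro ψ hψ
        have hψx : x ≤ ψ := hψ
        exact repB hc (by linarith) (by linarith)
          (fun s hs => absurd hs (Nat.not_lt_zero s))
          (fun s _ => transportA hΔ hxΔ hx0 hψx (hall s))
      exact ((hasDerivAt_H c Δ 0 x).hasDerivWithinAt).congr heq (heq Set.self_mem_Ici)
    · push_neg at hall
      set k := Nat.find hall with hkdef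
      have hk : c * (x - Δ) ^ k < x ^ k := Nat.find_spec hall
      have hmin : ∀ s < k, x ^ s ≤ c * (x - Δ) ^ s := fun s hs =>
        le_of_not_gt (Nat.find_min hall hs)
      have hopen : {ψ : ℝ | c * (ψ - Δ) ^ k < ψ ^ k} ∈ nhds x :=
        (isOpen_lt (by continuity : Continuous fun ψ : ℝ => c * (ψ - Δ) ^ k)
          (by continuity : Continuous fun ψ : ℝ => ψ ^ k)).mem_nhds hk
      rcases Metric.mem_nhds_iff.1 hopen with ⟨ε, hε, hball⟩
      refine ⟨gd c Δ k x, gd_nonneg hmin, ?_⟩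
      have hmem : Ico x (x + ε) ∈ nhdsWithin x (Ici x) :=
        Ico_mem_nhdsGE (by linarith)
      have heq : Set.EqOn (fun ψ : ℝ =>
          Real.exp (-ψ) * ∑' s : ℕ, ((s.factorial : ℝ))⁻¹ * min (ψ ^ s) (c * (ψ - Δ) ^ s))
          (G c Δ k) (Ico x (x + ε)) := by
        intro ψ hψ
        have hψx : x ≤ ψ := hψ.1
        have hψk : c * (ψ - Δ) ^ k < ψ ^ k := by
          apply hball
          rw [Metric.mem_ball, Real.dist_eq, abs_of_nonneg (by linarith)]
          linarith [hψ.2]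
        apply repA hc (by linarith) (by linarith)
          (fun s hs => transportA hΔ hxΔ hx0 hψx (hmin s hs))
        intro s hks
        obtain ⟨m, rfl⟩ := Nat.exists_eq_add_of_le hks
        have hψ0 : (0:ℝ) < ψ := by linarith
        have hψΔ0 : (0:ℝ) < ψ - Δ := by linarith
        have p1 : (ψ - Δ) ^ m ≤ ψ ^ m := pow_le_pow_left₀ (by linarith) (by linarith) m
        rw [pow_add, pow_add]
        nlinarith [mul_le_mul_of_nonneg_right hψk.le (pow_nonneg hψΔ0.le m),
          mul_le_mul_of_nonneg_left p1 (pow_nonneg hψ0.le k)]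
      exact ((hasDerivAt_G c Δ k x).hasDerivWithinAt).congr_of_eventuallyEq
        (eventuallyEq_of_mem hmem heq) (heq (left_mem_Ico.2 (by linarith)))
  · by_cases hall : ∀ s : ℕ, c * (x - Δ) ^ s ≤ x ^ s
    · refine ⟨gd c Δ 0 x, gd_nonneg (fun s hs => absurd hs (Nat.not_lt_zero s)), ?_⟩
      have heq : Set.EqOn (fun ψ : ℝ =>
          Real.exp (-ψ) * ∑' s : ℕ, ((s.factorial : ℝ))⁻¹ * min (ψ ^ s) (c * (ψ - Δ) ^ s))
          (G c Δ 0) (Ici x) := by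
        intro ψ hψ
        have hψx : x ≤ ψ := hψ
        exact repA hc (by linarith) (by linarith)
          (fun s hs => absurd hs (Nat.not_lt_zero s))
          (fun s _ => transportB hc hΔ hx0 hψx (hall s))
      exact ((hasDerivAt_G c Δ 0 x).hasDerivWithinAt).congr heq (heq Set.self_mem_Ici)
    · push_neg at hall
      set k := Nat.find hall with hkdef
      have hk : x ^ k < c * (x - Δ) ^ k := Nat.find_spec hall
      have hmin : ∀ s < k, c * (x - Δ) ^ s ≤ x ^ s := fun s hs =>
        le_of_not_gt (Nat.find_min hall hs)
      have hopen : {ψ : ℝ | ψ ^ k < c * (ψ - Δ) ^ k} ∈ nhds x :=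
        (isOpen_lt (by continuity : Continuous fun ψ : ℝ => ψ ^ k)
          (by continuity : Continuous fun ψ : ℝ => c * (ψ - Δ) ^ k)).mem_nhds hk
      rcases Metric.mem_nhds_iff.1 hopen with ⟨ε, hε, hball⟩
      refine ⟨hd c Δ k x, hd_nonneg hmin, ?_⟩
      have hmem : Ico x (x + ε) ∈ nhdsWithin x (Ici x) :=
        Ico_mem_nhdsGE (by linarith)
      have heq : Set.EqOn (fun ψ : ℝ =>
          Real.exp (-ψ) * ∑' s : ℕ, ((s.factorial : ℝ))⁻¹ * min (ψ ^ s) (c * (ψ - Δ) ^ s))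
          (H c Δ k) (Ico x (x + ε)) := by
        intro ψ hψ
        have hψx : x ≤ ψ := hψ.1
        have hψk : ψ ^ k < c * (ψ - Δ) ^ k := by
          apply hball
          rw [Metric.mem_ball, Real.dist_eq, abs_of_nonneg (by linarith)]
          linarith [hψ.2]
        apply repB hc (by linarith) (by linarith)
          (fun s hs => transportB hc hΔ hx0 hψx (hmin s hs))
        intro s hks
        obtain ⟨m, rfl⟩ := Nat.exists_eq_add_of_le hks
        have hψ0 : (0:ℝ) < ψ := by linarith
        have hψΔ0 : (0:ℝ) < ψ - Δ := by linarith
        have p1 : ψ ^ m ≤ (ψ - Δ) ^ m := pow_le_pow_left₀ (by linarith) (by linarith) m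
        rw [pow_add, pow_add]
        nlinarith [mul_le_mul_of_nonneg_right hψk.le (pow_nonneg hψ0.le m),
          mul_le_mul_of_nonneg_left p1 (mul_nonneg hc.le (pow_nonneg hψΔ0.le k))]
      exact ((hasDerivAt_H c Δ k x).hasDerivWithinAt).congr_of_eventuallyEq
        (eventuallyEq_of_mem hmem heq) (heq (left_mem_Ico.2 (by linarith)))


end Stmt0Aux

/-- For `c > 0`, `Δ ∈ ℝ`, the function
`E(ψ) = 𝔼[min(1, c·((ψ-Δ)/ψ)^S)]` with `S ~ Poisson(ψ)`, i.e.
`E(ψ) = e^{-ψ} ∑_{s} (1/s!) min(ψ^s, c(ψ-Δ)^s)`, is nondecreasing on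
`{ψ : max 0 Δ < ψ}`. -/
theorem stmt_0 (c Δ : ℝ) (hc : 0 < c) :
    MonotoneOn
      (fun ψ : ℝ =>
        Real.exp (-ψ) * ∑' s : ℕ, ((s.factorial : ℝ))⁻¹ * min (ψ ^ s) (c * (ψ - Δ) ^ s))
      {ψ : ℝ | max 0 Δ < ψ} := by
  intro a ha b hb hab
  simp only [Set.mem_setOf_eq] at ha hb
  have ha0 : 0 < a := lt_of_le_of_lt (le_max_left _ _) ha
  have haΔ : Δ < a := lt_of_le_of_lt (le_max_right _ _) ha
  have hB : ContinuousOn (fun ψ : ℝ =>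
      Real.exp (-ψ) * ∑' s : ℕ, ((s.factorial : ℝ))⁻¹ * min (ψ ^ s) (c * (ψ - Δ) ^ s))
      (Icc a b) := by
    apply ContinuousOn.mul (Continuous.continuousOn (by continuity))
    apply continuousOn_tsum (u := fun s : ℕ => ((s.factorial : ℝ))⁻¹ * b ^ s)
    · intro s
      apply Continuous.continuousOn
      exact continuous_const.mul ((continuous_pow s).min (continuous_const.mul (by continuity)))
    · exact Stmt0Aux.summable_aux b
    · intro s ψ hψ
      have h1 : 0 < ψ := lt_of_lt_of_le ha0 hψ.1
      have h2 : 0 < ψ - Δ := by linarith [hψ.1]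
      rw [Real.norm_eq_abs, abs_of_nonneg
        (mul_nonneg (by positivity) (le_min (by positivity) (by positivity)))]
      apply mul_le_mul_of_nonneg_left _ (by positivity)
      exact le_trans (min_le_left _ _) (pow_le_pow_left₀ h1.le hψ.2 s)
  have hB' : ∀ x ∈ Ico a b,
      HasDerivWithinAt (fun ψ : ℝ =>
        Real.exp (-ψ) * ∑' s : ℕ, ((s.factorial : ℝ))⁻¹ * min (ψ ^ s) (c * (ψ - Δ) ^ s))
        (derivWithin (fun ψ : ℝ =>
          Real.exp (-ψ) * ∑' s : ℕ, ((s.factorial : ℝ))⁻¹ * min (ψ ^ s) (c * (ψ - Δ) ^ s))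
          (Ici x) x) (Ici x) x ∧
      0 ≤ derivWithin (fun ψ : ℝ =>
          Real.exp (-ψ) * ∑' s : ℕ, ((s.factorial : ℝ))⁻¹ * min (ψ ^ s) (c * (ψ - Δ) ^ s))
          (Ici x) x := by
    intro x hx
    have hxD : max 0 Δ < x := lt_of_lt_of_le ha hx.1
    obtain ⟨d, hd0, hdd⟩ := Stmt0Aux.key c Δ hc hxD
    have hud := hdd.derivWithin (uniqueDiffOn_Ici x x Set.self_mem_Ici)
    rw [hud]
    exact ⟨hdd, hd0⟩
  have := image_le_of_deriv_right_le_deriv_boundary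
    (f := fun _ : ℝ =>
      Real.exp (-a) * ∑' s : ℕ, ((s.factorial : ℝ))⁻¹ * min (a ^ s) (c * (a - Δ) ^ s))
    (f' := fun _ : ℝ => (0 : ℝ)) (a := a) (b := b)
    continuousOn_const (fun x _ => hasDerivWithinAt_const x _ _)
    le_rfl hB (fun x hx => (hB' x hx).1) (fun x hx => (hB' x hx).2)
  exact this (Set.right_mem_Icc.2 hab)
end

section
/- Let u, v, x ∈ ℝ^d with u, v nonzero, let ω = (u·v)/(‖u‖‖v‖), and k > 0. Then |u·x|^k |v·x| ≤ D_k(ω) ‖u‖^k ‖v‖ ‖x‖^{k+1}, where D_k(ω) = (k + |ω| c_k(ω))^{(k+1)/2} / (c_k(ω) (k+1)^{(k+1)/2}) and c_k(ω) = sqrt(k + ((k−1)²/4)ω²) − ((k−1)/2)|ω|. -/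
open Real

lemma amgm {X Y k : ℝ} (hX : 0 ≤ X) (hY : 0 ≤ Y) (hk : 0 < k) :
    X ^ k * Y ≤ ((k * X + Y) / (k + 1)) ^ (k + 1) := by
  have hk1 : (0:ℝ) < k + 1 := by linarith
  have h := Real.geom_mean_le_arith_mean2_weighted (by positivity : (0:ℝ) ≤ k / (k+1))
    (by positivity : (0:ℝ) ≤ 1 / (k+1)) hX hY (by field_simp)
  have h2 : (X ^ (k/(k+1)) * Y ^ (1/(k+1))) ^ (k+1) ≤ ((k * X + Y) / (k + 1)) ^ (k+1) := by
    apply Real.rpow_le_rpow (by positivity) _ hk1.le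
    calc X ^ (k/(k+1)) * Y ^ (1/(k+1)) ≤ k/(k+1) * X + 1/(k+1) * Y := h
    _ = (k * X + Y) / (k + 1) := by ring
  calc X ^ k * Y = (X ^ (k/(k+1)) * Y ^ (1/(k+1))) ^ (k+1) := by
        rw [Real.mul_rpow (by positivity) (by positivity), ← Real.rpow_mul hX,
          ← Real.rpow_mul hY]
        rw [div_mul_cancel₀ _ hk1.ne', one_div, inv_mul_cancel₀ hk1.ne', Real.rpow_one]
    _ ≤ _ := h2

lemma core {k w c a b : ℝ} (hk : 0 < k) (hw0 : 0 ≤ w) (hw1 : w < 1)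
    (hcpos : 0 < c) (hc2 : c^2 = k - (k-1)*w*c) (h1wc : 0 < 1 - w*c)
    (ha : 0 ≤ a) (hb : 0 ≤ b) (hg : a^2 + b^2 - 2*a*b*w ≤ 1 - w^2) :
    a ^ k * b ≤ c ^ k * ((1-w^2)/((k+1)*(1-w*c))) ^ ((k+1)/2) := by
  have hk1 : (0:ℝ) < k + 1 := by linarith
  set t : ℝ := (1-w^2)/((k+1)*(1-w*c)) with htdef
  have hw2 : 0 < 1 - w^2 := by nlinarith
  have ht : 0 < t := by rw [htdef]; positivity
  -- polynomial key inequality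
  have hS : (k*a^2 + b^2*c^2)*(1-w*c) ≤ (1-w^2)*c^2 := by
    nlinarith [mul_nonneg (sq_nonneg c) (by linarith : (0:ℝ) ≤ 1 - w^2 - (a^2+b^2-2*a*b*w)),
      mul_nonneg (mul_nonneg hw0 hcpos.le) (sq_nonneg (a - c*b)), sq_nonneg a, hc2]
  have hpoly : k*a^2 + b^2*c^2 ≤ (k+1)*t*c^2 := by
    have h1 : (k+1)*t*c^2 = (1-w^2)*c^2/(1-w*c) := by
      rw [htdef]; field_simp
    rw [h1, le_div_iff₀ h1wc]; exact hS
  set X : ℝ := a^2/(c^2*t) with hXdef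
  set Y : ℝ := b^2/t with hYdef
  have hXn : 0 ≤ X := by positivity
  have hYn : 0 ≤ Y := by positivity
  have hinner : (k*X + Y)/(k+1) ≤ 1 := by
    rw [div_le_one hk1]
    have e : k*X + Y = (k*a^2 + b^2*c^2)/(c^2*t) := by
      rw [hXdef, hYdef]; field_simp
    rw [e, div_le_iff₀ (by positivity)]
    calc k*a^2 + b^2*c^2 ≤ (k+1)*t*c^2 := hpoly
      _ = (k+1)*(c^2*t) := by ring
  have hAG : X ^ k * Y ≤ 1 := by
    calc X ^ k * Y ≤ ((k*X+Y)/(k+1)) ^ (k+1) := amgm hXn hYn hk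
      _ ≤ 1 := Real.rpow_le_one (by positivity) hinner hk1.le
  have hsq : (a^2) ^ k * b^2 ≤ (c^2*t) ^ k * t := by
    have ea : a^2 = (c^2*t) * X := by rw [hXdef]; field_simp
    have eb : b^2 = t * Y := by rw [hYdef]; field_simp
    calc (a^2) ^ k * b^2 = ((c^2*t) * X) ^ k * (t * Y) := by rw [← ea, ← eb]
      _ = (c^2*t) ^ k * t * (X ^ k * Y) := by
          rw [Real.mul_rpow (by positivity) hXn]; ring
      _ ≤ (c^2*t) ^ k * t * 1 := by
          exact mul_le_mul_of_nonneg_left hAG (by positivity)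
      _ = (c^2*t) ^ k * t := by ring
  -- take square roots
  have hL : (a ^ k * b)^2 = (a^2) ^ k * b^2 := by
    have e1 : (a ^ k)^2 = (a^2) ^ k := by
      rw [← Real.rpow_natCast (a ^ k) 2, ← Real.rpow_mul ha, ← Real.rpow_natCast a 2,
        ← Real.rpow_mul ha]
      congr 1
      push_cast; ring
    rw [mul_pow, e1]
  have hR : (c ^ k * t ^ ((k+1)/2))^2 = (c^2*t) ^ k * t := by
    have e1 : (c ^ k)^2 = c ^ (2*k) := by
      rw [← Real.rpow_natCast (c ^ k) 2, ← Real.rpow_mul hcpos.le]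
      congr 1
      push_cast; ring
    have e2 : (t ^ ((k+1)/2))^2 = t ^ (k+1) := by
      rw [← Real.rpow_natCast (t ^ ((k+1)/2)) 2, ← Real.rpow_mul ht.le]
      congr 1
      push_cast; ring
    have e3 : (c^2*t) ^ k = c ^ (2*k) * t ^ k := by
      rw [Real.mul_rpow (by positivity) ht.le]
      congr 1
      rw [← Real.rpow_natCast c 2, ← Real.rpow_mul hcpos.le]
      norm_num
    rw [mul_pow, e1, e2, e3, Real.rpow_add_one ht.ne' k]
    try ring
  have h2 : (a ^ k * b)^2 ≤ (c ^ k * t ^ ((k+1)/2))^2 := by rw [hL, hR]; exact hsq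
  have h3 := Real.sqrt_le_sqrt h2
  rwa [Real.sqrt_sq (by positivity), Real.sqrt_sq (by positivity)] at h3

set_option maxHeartbeats 2000000

local notation "⟪" x ", " y "⟫" => @inner ℝ _ _ x y

lemma gram {E : Type*} [NormedAddCommGroup E] [InnerProductSpace ℝ E]
    (u v x : E) (hU : 0 < ‖u‖) :
    (⟪v,x⟫ * ‖u‖^2 - ⟪u,v⟫ * ⟪u,x⟫)^2 ≤
      (‖v‖^2 * ‖u‖^2 - ⟪u,v⟫^2) * (‖x‖^2 * ‖u‖^2 - ⟪u,x⟫^2) := by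
  have h := real_inner_mul_inner_self_le ((‖u‖^2:ℝ) • v - ⟪u,v⟫ • u) ((‖u‖^2:ℝ) • x - ⟪u,x⟫ • u)
  simp only [inner_sub_left, inner_sub_right, real_inner_smul_left, real_inner_smul_right,
    real_inner_comm u v, real_inner_comm u x, real_inner_comm v x,
    real_inner_self_eq_norm_sq, norm_smul, Real.norm_eq_abs, mul_pow, abs_pow, abs_norm,
    sq_abs] at h
  have hK2 : (0:ℝ) < (‖u‖^2)^2 := by positivity
  have h2 : (‖u‖^2)^2 * ((⟪v,x⟫ * ‖u‖^2 - ⟪u,v⟫ * ⟪u,x⟫)^2) ≤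
      (‖u‖^2)^2 * ((‖v‖^2 * ‖u‖^2 - ⟪u,v⟫^2) * (‖x‖^2 * ‖u‖^2 - ⟪u,x⟫^2)) := by nlinarith [h]
  exact le_of_mul_le_mul_left h2 hK2

/-- Improved Cauchy–Schwarz product bound: for nonzero `u, v ∈ ℝ^d`, any `x`,
`ω = u·v/(‖u‖‖v‖)` and `k > 0`,
`|u·x|^k |v·x| ≤ D_k(ω) ‖u‖^k ‖v‖ ‖x‖^{k+1}` where
`c_k(ω) = √(k + ((k−1)²/4)ω²) − ((k−1)/2)|ω|` and
`D_k(ω) = (k + |ω|c_k(ω))^{(k+1)/2} / (c_k(ω)(k+1)^{(k+1)/2})`. -/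
theorem stmt_8 (d : ℕ) (u v x : EuclideanSpace ℝ (Fin d))
    (hu : u ≠ 0) (hv : v ≠ 0) (k : ℝ) (hk : 0 < k) :
    |(inner ℝ u x : ℝ)| ^ k * |(inner ℝ v x : ℝ)| ≤
      (let ω := (inner ℝ u v : ℝ) / (‖u‖ * ‖v‖)
       let ck := Real.sqrt (k + (k - 1) ^ 2 / 4 * ω ^ 2) - (k - 1) / 2 * |ω|
       (k + |ω| * ck) ^ ((k + 1) / 2) / (ck * (k + 1) ^ ((k + 1) / 2)))
        * ‖u‖ ^ k * ‖v‖ * ‖x‖ ^ (k + 1) := by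
  rcases eq_or_ne x 0 with rfl | hx
  · simp [Real.zero_rpow hk.ne', Real.zero_rpow (show k + 1 ≠ 0 by positivity)]
  have hU : 0 < ‖u‖ := norm_pos_iff.mpr hu
  have hV : 0 < ‖v‖ := norm_pos_iff.mpr hv
  have hX : 0 < ‖x‖ := norm_pos_iff.mpr hx
  have hk1 : (0:ℝ) < k + 1 := by linarith
  have hG := gram u v x hU
  have hA' := abs_real_inner_le_norm u x
  have hB' := abs_real_inner_le_norm v x
  have hP' := abs_real_inner_le_norm u v
  show |(inner ℝ u x : ℝ)| ^ k * |(inner ℝ v x : ℝ)| ≤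
      (k + |(inner ℝ u v : ℝ) / (‖u‖ * ‖v‖)| *
        (Real.sqrt (k + (k - 1) ^ 2 / 4 * ((inner ℝ u v : ℝ) / (‖u‖ * ‖v‖)) ^ 2) -
          (k - 1) / 2 * |(inner ℝ u v : ℝ) / (‖u‖ * ‖v‖)|)) ^ ((k + 1) / 2) /
        ((Real.sqrt (k + (k - 1) ^ 2 / 4 * ((inner ℝ u v : ℝ) / (‖u‖ * ‖v‖)) ^ 2) -
          (k - 1) / 2 * |(inner ℝ u v : ℝ) / (‖u‖ * ‖v‖)|) * (k + 1) ^ ((k + 1) / 2))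
        * ‖u‖ ^ k * ‖v‖ * ‖x‖ ^ (k + 1)
  generalize hA : (inner ℝ u x : ℝ) = A at hG hA' ⊢
  generalize hB : (inner ℝ v x : ℝ) = B at hG hB' ⊢
  generalize hP : (inner ℝ u v : ℝ) = P at hG hP' ⊢
  clear hA hB hP
  generalize hnU : ‖u‖ = U at hU hG hA' hP' ⊢
  generalize hnV : ‖v‖ = V at hV hG hB' hP' ⊢
  generalize hnX : ‖x‖ = X at hX hG hA' hB' ⊢
  clear hnU hnV hnX hu hv hx u v x d
  generalize hω : P / (U * V) = ω
  generalize hsd : Real.sqrt (k + (k - 1) ^ 2 / 4 * ω ^ 2) = s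
  generalize hwd : |ω| = w
  generalize hcd : s - (k - 1) / 2 * w = c
  have hw0 : 0 ≤ w := hwd ▸ abs_nonneg ω
  have hωw : ω ^ 2 = w ^ 2 := by rw [← hwd, sq_abs]
  have hPw : |P| = w * (U * V) := by
    rw [← hwd, ← hω, abs_div, abs_of_pos (mul_pos hU hV),
      div_mul_cancel₀ _ (by positivity : U * V ≠ 0)]
  have hw1 : w ≤ 1 := by
    have h := hP'
    rw [hPw] at h
    nlinarith [mul_pos hU hV]
  have hs : s ^ 2 = k + (k - 1) ^ 2 / 4 * w ^ 2 := by
    rw [← hsd, Real.sq_sqrt (by positivity), hωw]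
  have hsn : 0 ≤ s := hsd ▸ Real.sqrt_nonneg _
  have hcpos : 0 < c := by
    rw [← hcd]
    nlinarith [hs, hsn, hk, hw0]
  have hc2 : c ^ 2 = k - (k - 1) * w * c := by
    rw [← hcd]; linear_combination hs
  rcases hw1.lt_or_eq with hwlt | hweq
  · -- main case w < 1
    have hww : w ^ 2 < 1 := by nlinarith [hwlt, hw0]
    have hw2 : (0:ℝ) < 1 - w ^ 2 := by linarith
    have h1wc : 0 < 1 - w * c := by
      have hM : (0:ℝ) < 1 + (k - 1) / 2 * w ^ 2 := by
        nlinarith [mul_nonneg hk.le (sq_nonneg w), hww]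
      have hws : 0 ≤ w * s := mul_nonneg hw0 hsn
      have hMws : (0:ℝ) < 1 + (k - 1) / 2 * w ^ 2 + w * s := by linarith
      have hws2 : w ^ 2 * s ^ 2 = w ^ 2 * (k + (k - 1) ^ 2 / 4 * w ^ 2) := by rw [hs]
      rw [← hcd]
      nlinarith [hMws, hws2, hww]
    set a : ℝ := |A| / (U * X) with hadef
    set b : ℝ := |B| / (V * X) with hbdef
    have ha : 0 ≤ a := by positivity
    have hb : 0 ≤ b := by positivity
    have hg : a ^ 2 + b ^ 2 - 2 * a * b * w ≤ 1 - w ^ 2 := by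
      have h4 : U^2 * (V^2 * A^2 + U^2 * B^2 - 2 * (A * B * P)) ≤
          U^2 * (U^2 * V^2 * X^2 - P^2 * X^2) := by nlinarith [hG]
      have h3 := le_of_mul_le_mul_left h4 (by positivity : (0:ℝ) < U^2)
      have habs : A * B * P ≤ |A| * |B| * |P| := by
        rw [← abs_mul, ← abs_mul]; exact le_abs_self _
      have h5 : V^2 * |A|^2 + U^2 * |B|^2 - 2 * (|A| * |B| * |P|) ≤
          U^2 * V^2 * X^2 - |P|^2 * X^2 := by
        simp only [sq_abs]; linarith
      have hq : (0:ℝ) < U^2 * V^2 * X^2 := by positivity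
      rw [← mul_le_mul_iff_of_pos_right hq]
      have e1 : (a ^ 2 + b ^ 2 - 2 * a * b * w) * (U^2 * V^2 * X^2) =
          V^2 * |A|^2 + U^2 * |B|^2 - 2 * (|A| * |B| * (w * (U * V))) := by
        rw [hadef, hbdef]
        field_simp
      have e2 : (1 - w ^ 2) * (U^2 * V^2 * X^2) =
          U^2 * V^2 * X^2 - (w * (U * V))^2 * X^2 := by
        ring
      rw [e1, e2, ← hPw]
      have hsqP : |P|^2 = P^2 := sq_abs P
      linarith [h5]
    have hcore := core hk hw0 hwlt hcpos hc2 h1wc ha hb hg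
    set t : ℝ := (1 - w ^ 2) / ((k + 1) * (1 - w * c)) with htdef
    have ht : 0 < t := by rw [htdef]; exact div_pos hw2 (mul_pos hk1 h1wc)
    have hkwc : (k + w * c) * (1 - w * c) = c ^ 2 * (1 - w ^ 2) := by
      linear_combination (-1 : ℝ) * hc2
    have hD : (k + w * c) ^ ((k + 1) / 2) / (c * (k + 1) ^ ((k + 1) / 2)) =
        c ^ k * t ^ ((k + 1) / 2) := by
      have e0 : k + w * c = c ^ 2 * t * (k + 1) := by
        rw [htdef]
        field_simp
        linear_combination (k + 1) * hkwc + k * hc2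
      have ec : ((c ^ 2 : ℝ)) ^ ((k + 1) / 2) = c ^ (k + 1) := by
        rw [← Real.rpow_natCast c 2, ← Real.rpow_mul hcpos.le]
        congr 1
        push_cast; ring
      rw [e0, Real.mul_rpow (by positivity) hk1.le,
        Real.mul_rpow (by positivity) ht.le, ec, Real.rpow_add_one hcpos.ne' k]
      have hkq : (0:ℝ) < (k + 1) ^ ((k + 1) / 2) := Real.rpow_pos_of_pos hk1 _
      field_simp
    calc |A| ^ k * |B| = (a * (U * X)) ^ k * (b * (V * X)) := by
          rw [hadef, hbdef, div_mul_cancel₀ _ (by positivity : U * X ≠ 0),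
            div_mul_cancel₀ _ (by positivity : V * X ≠ 0)]
      _ = (a ^ k * b) * ((U * X) ^ k * (V * X)) := by
          rw [Real.mul_rpow ha (by positivity)]; ring
      _ ≤ (c ^ k * t ^ ((k + 1) / 2)) * ((U * X) ^ k * (V * X)) :=
          mul_le_mul_of_nonneg_right hcore (by positivity)
      _ = (k + w * c) ^ ((k + 1) / 2) / (c * (k + 1) ^ ((k + 1) / 2))
            * U ^ k * V * X ^ (k + 1) := by
          rw [hD, Real.mul_rpow hU.le hX.le, Real.rpow_add_one hX.ne' k]
          ring
  · -- degenerate case w = 1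
    have hc1 : c = 1 := by
      have h0 : (c - 1) * (c + k) = 0 := by
        have h1 := hc2
        rw [hweq] at h1
        linear_combination h1
      rcases mul_eq_zero.mp h0 with h | h
      · linarith
      · linarith
    rw [hweq, hc1]
    have hD1 : (k + 1 * 1) ^ ((k + 1) / 2) / (1 * (k + 1) ^ ((k + 1) / 2)) = 1 := by
      rw [mul_one, one_mul, div_self (ne_of_gt (Real.rpow_pos_of_pos hk1 _))]
    rw [hD1]
    calc |A| ^ k * |B| ≤ (U * X) ^ k * (V * X) :=
          mul_le_mul (Real.rpow_le_rpow (abs_nonneg _) hA' hk.le) hB' (abs_nonneg _)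
            (by positivity)
      _ = 1 * U ^ k * V * X ^ (k + 1) := by
          rw [Real.mul_rpow hU.le hX.le, Real.rpow_add_one hX.ne' k]
          ring
end

section
/- For u, v, x ∈ ℝ^d with u, v nonzero and ω = (u·v)/(‖u‖‖v‖), we have |u·x| |v·x| ≤ ((1+|ω|)/2) ‖u‖ ‖v‖ ‖x‖². -/
/-- `k = 1` case of the improved Cauchy–Schwarz product bound: for nonzero
`u, v ∈ ℝ^d` and any `x`, with `ω = u·v/(‖u‖‖v‖)`,
`|u·x||v·x| ≤ ((1+|ω|)/2)‖u‖‖v‖‖x‖²`. -/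
theorem stmt_9 (d : ℕ) (u v x : EuclideanSpace ℝ (Fin d))
    (hu : u ≠ 0) (hv : v ≠ 0) :
    |(inner ℝ u x : ℝ)| * |(inner ℝ v x : ℝ)| ≤
      (1 + |(inner ℝ u v : ℝ) / (‖u‖ * ‖v‖)|) / 2 * ‖u‖ * ‖v‖ * ‖x‖ ^ 2 := by
  set p : ℝ := inner ℝ u x with hp
  set q : ℝ := inner ℝ v x with hq
  set s : ℝ := inner ℝ u v with hs
  have hu' : (0:ℝ) < ‖u‖ := norm_pos_iff.mpr hu
  have hv' : (0:ℝ) < ‖v‖ := norm_pos_iff.mpr hv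
  set ε : ℝ := if 0 ≤ p * q then 1 else -1 with hε
  have hε2 : ε ^ 2 = 1 := by
    rcases le_or_gt 0 (p * q) with h | h <;> simp [hε, not_le.mpr, h]
  have hεpq : ε * (p * q) = |p| * |q| := by
    rw [← abs_mul]
    rcases le_or_gt 0 (p * q) with h | h
    · simp [hε, h, abs_of_nonneg h]
    · simp [hε, not_le.mpr h, abs_of_neg h]
  have hεs : ε * s ≤ |s| := by
    rcases le_or_gt 0 (p * q) with h | h
    · simp [hε, h]; exact le_abs_self s
    · simp [hε, not_le.mpr h]; exact neg_le_abs s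
  set w : EuclideanSpace ℝ (Fin d) := ‖v‖ • u + (ε * ‖u‖) • v with hw
  have hwx : (inner ℝ w x : ℝ) = ‖v‖ * p + ε * ‖u‖ * q := by
    simp only [hw, inner_add_left, real_inner_smul_left, hp, hq]
  have hww : (inner ℝ w w : ℝ) =
      ‖v‖ ^ 2 * ‖u‖ ^ 2 + ε ^ 2 * ‖u‖ ^ 2 * ‖v‖ ^ 2 + 2 * ‖u‖ * ‖v‖ * (ε * s) := by
    rw [hw, real_inner_add_add_self]
    simp only [real_inner_smul_left, real_inner_smul_right, real_inner_self_eq_norm_sq, ← hs,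
      norm_smul, Real.norm_eq_abs, abs_norm, mul_pow, sq_abs]
    ring
  have hCS := real_inner_mul_inner_self_le w x
  rw [hwx, hww, real_inner_self_eq_norm_sq x] at hCS
  have e1 : (‖v‖ * p + ε * ‖u‖ * q) * (‖v‖ * p + ε * ‖u‖ * q) =
      ‖v‖ ^ 2 * p ^ 2 + ‖u‖ ^ 2 * q ^ 2 + 2 * ‖u‖ * ‖v‖ * (|p| * |q|) := by
    have h0 : (‖v‖ * p + ε * ‖u‖ * q) * (‖v‖ * p + ε * ‖u‖ * q) =
        ‖v‖ ^ 2 * p ^ 2 + ε ^ 2 * (‖u‖ ^ 2 * q ^ 2) + 2 * ‖u‖ * ‖v‖ * (ε * (p * q)) := by ring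
    rw [h0, hε2, hεpq]; ring
  rw [e1, hε2] at hCS
  have hx2 : (0:ℝ) ≤ ‖x‖ ^ 2 := sq_nonneg _
  have hεs' : 2 * ‖u‖ * ‖v‖ * (ε * s) * ‖x‖ ^ 2 ≤ 2 * ‖u‖ * ‖v‖ * |s| * ‖x‖ ^ 2 := by
    have : (0:ℝ) ≤ 2 * ‖u‖ * ‖v‖ * ‖x‖ ^ 2 := by positivity
    nlinarith [mul_le_mul_of_nonneg_right hεs this]
  have hkey : 4 * (‖u‖ * ‖v‖) * (|p| * |q|) ≤
      2 * (‖u‖ * ‖v‖) * (‖u‖ * ‖v‖ + |s|) * ‖x‖ ^ 2 := by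
    nlinarith [sq_nonneg (‖v‖ * |p| - ‖u‖ * |q|), sq_abs p, sq_abs q]
  have habs : |s / (‖u‖ * ‖v‖)| = |s| / (‖u‖ * ‖v‖) := by
    rw [abs_div, abs_of_pos (mul_pos hu' hv')]
  rw [habs]
  have h4 : (0:ℝ) < 4 * (‖u‖ * ‖v‖) := by positivity
  have hgoal : (1 + |s| / (‖u‖ * ‖v‖)) / 2 * ‖u‖ * ‖v‖ * ‖x‖ ^ 2 =
      2 * (‖u‖ * ‖v‖) * (‖u‖ * ‖v‖ + |s|) * ‖x‖ ^ 2 / (4 * (‖u‖ * ‖v‖)) := by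
    field_simp
    ring
  rw [hgoal, le_div_iff₀ h4]
  linarith [hkey]
end

section
/- Let ℓ: ℝ^d → ℝ be twice continuously differentiable with gradient g and Hessian H. Suppose that for some x ∈ ℝ^d and M ≥ 0, |uᵀH(θ₁)v| ≤ |xᵀu| |xᵀv| M for all θ₁ in the triangle with vertices θ, θ', θ̂ and all u, v ∈ ℝ^d. Then |ℓ(θ') − ℓ(θ) − (θ'−θ)ᵀ g(θ̂)| ≤ |xᵀ(θ'−θ)| · max(|xᵀ(θ−θ̂)|, |xᵀ(θ'−θ̂)|) · M. -/
/-- First-order control-variate error bound with inner-product Hessian bound: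
if `|uᵀH(θ₁)v| ≤ |xᵀu||xᵀv|M` on the triangle with vertices `θ, θ', θ̂`, then
`|ℓ(θ') − ℓ(θ) − (θ'−θ)ᵀg(θ̂)| ≤ |xᵀ(θ'−θ)| max(|xᵀ(θ−θ̂)|, |xᵀ(θ'−θ̂)|) M`. -/
theorem stmt_10 (d : ℕ) (ℓ : EuclideanSpace ℝ (Fin d) → ℝ)
    (hℓ : ContDiff ℝ 2 ℓ)
    (θ θ' θh x : EuclideanSpace ℝ (Fin d)) (M : ℝ) (hM : 0 ≤ M)
    (hH : ∀ θ₁ ∈ convexHull ℝ ({θ, θ', θh} : Set (EuclideanSpace ℝ (Fin d))),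
      ∀ u v : EuclideanSpace ℝ (Fin d),
        |fderiv ℝ (fun z => fderiv ℝ ℓ z) θ₁ u v| ≤
          |(inner ℝ x u : ℝ)| * |(inner ℝ x v : ℝ)| * M) :
    |ℓ θ' - ℓ θ - (inner ℝ (θ' - θ) (gradient ℓ θh) : ℝ)| ≤
      |(inner ℝ x (θ' - θ) : ℝ)| *
        max |(inner ℝ x (θ - θh) : ℝ)| |(inner ℝ x (θ' - θh) : ℝ)| * M := by
  classical
  have hℓd : Differentiable ℝ ℓ := hℓ.differentiable (by norm_num)
  have hℓ'd : Differentiable ℝ (fun z => fderiv ℝ ℓ z) :=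
    (hℓ.fderiv_right (m := 1) (by norm_num)).differentiable one_ne_zero
  set v : EuclideanSpace ℝ (Fin d) := θ' - θ with hv
  set T := convexHull ℝ ({θ, θ', θh} : Set (EuclideanSpace ℝ (Fin d))) with hT
  have hθT : θ ∈ T := subset_convexHull _ _ (by simp)
  have hθ'T : θ' ∈ T := subset_convexHull _ _ (by simp)
  have hθhT : θh ∈ T := convexHull_mono (by intro z hz; exact hz) (subset_convexHull _ _ (by simp))
  have hconv : Convex ℝ T := convex_convexHull _ _
  set Cmax : ℝ := max |(inner ℝ x (θ - θh) : ℝ)| |(inner ℝ x (θ' - θh) : ℝ)| with hCmax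
  set K : ℝ := |(inner ℝ x v : ℝ)| * Cmax * M with hK
  have hK0 : 0 ≤ K := by
    apply mul_nonneg (mul_nonneg (abs_nonneg _) ?_) hM
    exact le_trans (abs_nonneg _) (le_max_left _ _)
  -- the bound on the derivative of the outer function
  have key : ∀ t ∈ Set.Icc (0:ℝ) 1,
      |fderiv ℝ ℓ (θ + t • v) v - fderiv ℝ ℓ θh v| ≤ K := by
    intro t ht
    set c : EuclideanSpace ℝ (Fin d) := θ + t • v with hc
    have hcT : c ∈ T := by
      have hc' : c = (1 - t) • θ + t • θ' := by
        rw [hc, hv]; module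
      rw [hc']
      exact hconv hθT hθ'T (by linarith [ht.2]) ht.1 (by ring)
    set w : EuclideanSpace ℝ (Fin d) := c - θh with hw
    have hwbound : |(inner ℝ x w : ℝ)| ≤ Cmax := by
      have hw' : w = (1 - t) • (θ - θh) + t • (θ' - θh) := by
        rw [hw, hc, hv]; module
      rw [hw', inner_add_right, real_inner_smul_right, real_inner_smul_right]
      calc |(1 - t) * (inner ℝ x (θ - θh) : ℝ) + t * (inner ℝ x (θ' - θh) : ℝ)|
          ≤ |(1 - t) * (inner ℝ x (θ - θh) : ℝ)| + |t * (inner ℝ x (θ' - θh) : ℝ)| :=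
            abs_add_le _ _
        _ ≤ (1 - t) * Cmax + t * Cmax := by
            rw [abs_mul, abs_mul, abs_of_nonneg (by linarith [ht.2] : (0:ℝ) ≤ 1 - t),
              abs_of_nonneg ht.1]
            have h1 : |(inner ℝ x (θ - θh) : ℝ)| ≤ Cmax := le_max_left _ _
            have h2 : |(inner ℝ x (θ' - θh) : ℝ)| ≤ Cmax := le_max_right _ _
            have ht1 : (0:ℝ) ≤ 1 - t := by linarith [ht.2]
            have e1 := mul_le_mul_of_nonneg_left h1 ht1
            have e2 := mul_le_mul_of_nonneg_left h2 ht.1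
            linarith
        _ = Cmax := by ring
    -- inner mean-value argument along the segment from θh to c
    set h : ℝ → ℝ := fun s => fderiv ℝ ℓ (θh + s • w) v with hh
    have hmemT : ∀ s ∈ Set.Icc (0:ℝ) 1, θh + s • w ∈ T := by
      intro s hs
      have : θh + s • w = (1 - s) • θh + s • c := by rw [hw]; module
      rw [this]
      exact hconv hθhT hcT (by linarith [hs.2]) hs.1 (by ring)
    have hderiv : ∀ s ∈ Set.Icc (0:ℝ) 1,
        HasDerivWithinAt h
          (fderiv ℝ (fun z => fderiv ℝ ℓ z) (θh + s • w) w v) (Set.Icc 0 1) s := by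
      intro s _
      have hline : HasDerivAt (fun s : ℝ => θh + s • w) w s := by
        simpa using ((hasDerivAt_id s).smul_const w).const_add θh
      have h1 : HasDerivAt (fun s : ℝ => fderiv ℝ ℓ (θh + s • w))
          (fderiv ℝ (fun z => fderiv ℝ ℓ z) (θh + s • w) w) s :=
        ((hℓ'd (θh + s • w)).hasFDerivAt).comp_hasDerivAt s hline
      have h2 := h1.clm_apply (hasDerivAt_const s v)
      simpa using h2.hasDerivWithinAt
    have hbound : ∀ s ∈ Set.Ico (0:ℝ) 1,
        ‖fderiv ℝ (fun z => fderiv ℝ ℓ z) (θh + s • w) w v‖ ≤ K := by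
      intro s hs
      have hmem := hmemT s ⟨hs.1, le_of_lt hs.2⟩
      calc ‖fderiv ℝ (fun z => fderiv ℝ ℓ z) (θh + s • w) w v‖
          = |fderiv ℝ (fun z => fderiv ℝ ℓ z) (θh + s • w) w v| := rfl
        _ ≤ |(inner ℝ x w : ℝ)| * |(inner ℝ x v : ℝ)| * M := hH _ hmem w v
        _ ≤ Cmax * |(inner ℝ x v : ℝ)| * M := by gcongr
        _ = K := by rw [hK]; ring
    have hmv := norm_image_sub_le_of_norm_deriv_le_segment' hderiv hbound 1
      (Set.right_mem_Icc.2 zero_le_one)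
    have h1eq : h 1 = fderiv ℝ ℓ c v := by
      rw [hh]; simp [hw]
    have h0eq : h 0 = fderiv ℝ ℓ θh v := by
      rw [hh]; simp
    rw [h1eq, h0eq] at hmv
    simpa [hc] using hmv
  -- outer mean-value argument
  set G : ℝ → ℝ := fun t => ℓ (θ + t • v) - t * fderiv ℝ ℓ θh v with hG
  have hGderiv : ∀ t ∈ Set.Icc (0:ℝ) 1,
      HasDerivWithinAt G (fderiv ℝ ℓ (θ + t • v) v - fderiv ℝ ℓ θh v)
        (Set.Icc 0 1) t := by
    intro t _
    have hline : HasDerivAt (fun t : ℝ => θ + t • v) v t := by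
      simpa using ((hasDerivAt_id t).smul_const v).const_add θ
    have h1 : HasDerivAt (fun t : ℝ => ℓ (θ + t • v)) (fderiv ℝ ℓ (θ + t • v) v) t :=
      ((hℓd (θ + t • v)).hasFDerivAt).comp_hasDerivAt t hline
    have h2 : HasDerivAt (fun t : ℝ => t * fderiv ℝ ℓ θh v) (fderiv ℝ ℓ θh v) t := by
      simpa using (hasDerivAt_id t).mul_const (fderiv ℝ ℓ θh v)
    exact (h1.sub h2).hasDerivWithinAt
  have hGbound : ∀ t ∈ Set.Ico (0:ℝ) 1,
      ‖fderiv ℝ ℓ (θ + t • v) v - fderiv ℝ ℓ θh v‖ ≤ K := by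
    intro t ht
    exact key t ⟨ht.1, le_of_lt ht.2⟩
  have hmv := norm_image_sub_le_of_norm_deriv_le_segment' hGderiv hGbound 1
    (Set.right_mem_Icc.2 zero_le_one)
  have hG1 : G 1 = ℓ θ' - fderiv ℝ ℓ θh v := by
    rw [hG]; simp [hv]
  have hG0 : G 0 = ℓ θ := by rw [hG]; simp
  rw [hG1, hG0] at hmv
  have hgrad : (inner ℝ v (gradient ℓ θh) : ℝ) = fderiv ℝ ℓ θh v := by
    rw [real_inner_comm]
    exact InnerProductSpace.toDual_symm_apply
  calc |ℓ θ' - ℓ θ - (inner ℝ (θ' - θ) (gradient ℓ θh) : ℝ)|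
      = ‖ℓ θ' - fderiv ℝ ℓ θh v - ℓ θ‖ := by
        rw [← hv, hgrad, Real.norm_eq_abs]; ring_nf
    _ ≤ K * (1 - 0) := hmv
    _ = |(inner ℝ x v : ℝ)| * Cmax * M := by rw [hK]; ring
end

section
/- Let ℓ: ℝ^d → ℝ be thrice differentiable with gradient g and Hessian H, and suppose there is L ≥ 0 such that |uᵀ{H(θ₂)−H(θ₁)}v| ≤ ‖u‖‖v‖‖θ₂−θ₁‖L for all θ₁, θ₂ in the convex hull of {θ, θ', θ̂}. Then with r^(2)(θ,θ';θ̂) = (θ'−θ)ᵀg(θ̂) + (θ'−θ)ᵀH(θ̂)((θ'+θ)/2 − θ̂), we have |ℓ(θ') − ℓ(θ) − r^(2)(θ,θ';θ̂)| ≤ (L/12)‖θ'−θ‖³ + (L/2)‖θ'−θ‖‖θ−θ̂‖² + (L/2)‖θ'−θ‖‖θ'−θ̂‖². -/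
set_option maxHeartbeats 1000000
open MeasureTheory intervalIntegral InnerProductSpace

lemma sq_combo_le (t x y n : ℝ) (ht0 : 0 ≤ t) (ht1 : t ≤ 1) (hx : 0 ≤ x)
    (hy : 0 ≤ y) (hn : 0 ≤ n) (h : n ≤ (1 - t) * x + t * y) : n ^ 2 ≤ x ^ 2 + y ^ 2 := by
  have h2 : n ^ 2 ≤ ((1 - t) * x + t * y) ^ 2 := by nlinarith
  nlinarith [mul_nonneg (mul_nonneg ht0 (sub_nonneg.2 ht1)) (sq_nonneg (x - y)),
    mul_nonneg ht0 (sub_nonneg.2 ht1), sq_nonneg (x - y), sq_nonneg (x + y),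
    mul_nonneg hx hy]

/-- Second-order control-variate error bound: if the Hessian is `L`-Lipschitz
(in the bilinear/operator sense) on the convex hull of `{θ, θ', θ̂}`, then with
`r² = (θ'−θ)ᵀg(θ̂) + (θ'−θ)ᵀH(θ̂)((θ'+θ)/2 − θ̂)`,
`|ℓ(θ') − ℓ(θ) − r²| ≤ (L/12)‖θ'−θ‖³ + (L/2)‖θ'−θ‖‖θ−θ̂‖² + (L/2)‖θ'−θ‖‖θ'−θ̂‖²`. -/
theorem stmt_12 (d : ℕ) (ℓ : EuclideanSpace ℝ (Fin d) → ℝ)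
    (hℓ : ContDiff ℝ 3 ℓ)
    (θ θ' θh : EuclideanSpace ℝ (Fin d)) (L : ℝ) (hL : 0 ≤ L)
    (hLip : ∀ θ₁ ∈ convexHull ℝ ({θ, θ', θh} : Set (EuclideanSpace ℝ (Fin d))),
      ∀ θ₂ ∈ convexHull ℝ ({θ, θ', θh} : Set (EuclideanSpace ℝ (Fin d))),
      ∀ u v : EuclideanSpace ℝ (Fin d),
        |fderiv ℝ (fun z => fderiv ℝ ℓ z) θ₂ u v -
            fderiv ℝ (fun z => fderiv ℝ ℓ z) θ₁ u v| ≤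
          ‖u‖ * ‖v‖ * ‖θ₂ - θ₁‖ * L) :
    |ℓ θ' - ℓ θ - ((inner ℝ (θ' - θ) (gradient ℓ θh) : ℝ) +
        fderiv ℝ (fun z => fderiv ℝ ℓ z) θh (θ' - θ)
          ((2 : ℝ)⁻¹ • (θ' + θ) - θh))| ≤
      L / 12 * ‖θ' - θ‖ ^ 3 + L / 2 * ‖θ' - θ‖ * ‖θ - θh‖ ^ 2 +
        L / 2 * ‖θ' - θ‖ * ‖θ' - θh‖ ^ 2 := by
  classical
  let E := EuclideanSpace ℝ (Fin d)
  set S : Set E := convexHull ℝ ({θ, θ', θh} : Set E) with hS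
  set D : E → (E →L[ℝ] ℝ) := fun z => fderiv ℝ ℓ z with hD
  set H : E → (E →L[ℝ] E →L[ℝ] ℝ) := fun z => fderiv ℝ D z with hHdef
  -- smoothness facts
  have hd1 : Differentiable ℝ ℓ := hℓ.differentiable (by norm_num)
  have hD2 : ContDiff ℝ 2 D := hℓ.fderiv_right (by norm_num)
  have hd2 : Differentiable ℝ D := hD2.differentiable (by norm_num)
  have hHcont : Continuous H := (hD2.fderiv_right (m := 1) (by norm_num)).continuous
  -- hull facts
  have hconv : Convex ℝ S := convex_convexHull ℝ _
  have hθS : θ ∈ S := subset_convexHull ℝ _ (by simp)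
  have hθ'S : θ' ∈ S := subset_convexHull ℝ _ (by simp)
  have hθhS : θh ∈ S := subset_convexHull ℝ _ (by simp)
  -- key inner estimate
  have key : ∀ x ∈ S, ∀ u : E,
      |D x u - D θh u - H θh (x - θh) u| ≤ L / 2 * ‖x - θh‖ ^ 2 * ‖u‖ := by
    intro x hx u
    set w : E := x - θh with hw
    set c : ℝ → E := fun s => θh + s • w with hc
    have hcs : ∀ s : ℝ, HasDerivAt c w s := by
      intro s
      have h := ((hasDerivAt_id' s).smul_const w).const_add θh
      rw [one_smul] at h
      exact h
    have hcmem : ∀ s ∈ Set.Icc (0:ℝ) 1, c s ∈ S := fun s hs =>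
      hconv.add_smul_sub_mem hθhS hx hs
    -- ψ and its derivative
    have hψ : ∀ s : ℝ, HasDerivAt (fun s => D (c s) u - s * (H θh w u))
        (H (c s) w u - H θh w u) s := by
      intro s
      have h1 : HasDerivAt (fun s => D (c s) u) (H (c s) w u) s := by
        have := (((hd2 (c s)).hasFDerivAt).comp_hasDerivAt s (hcs s)).clm_apply
          (hasDerivAt_const s u)
        simpa using this
      have h2 := (hasDerivAt_id' s).mul_const (H θh w u)
      rw [one_mul] at h2
      exact h1.sub h2
    have hcont : Continuous fun s => H (c s) w u - H θh w u := by
      have hcc : Continuous c := continuous_const.add (continuous_id.smul continuous_const)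
      exact (((hHcont.comp hcc).clm_apply continuous_const).clm_apply
        continuous_const).sub continuous_const
    have hint : IntervalIntegrable (fun s => H (c s) w u - H θh w u) volume 0 1 :=
      hcont.intervalIntegrable 0 1
    have hFTC : ∫ s in (0:ℝ)..1, (H (c s) w u - H θh w u) =
        (D x u - 1 * (H θh w u)) - (D θh u - 0 * (H θh w u)) := by
      have := intervalIntegral.integral_eq_sub_of_hasDerivAt
        (f := fun s => D (c s) u - s * (H θh w u))
        (f' := fun s => H (c s) w u - H θh w u)
        (fun s _ => hψ s) hint
      have hc1 : c 1 = x := by simp [hc, hw]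
      have hc0 : c 0 = θh := by simp [hc]
      rw [this]; simp only [hc1, hc0]
    have hbound : ∀ s ∈ Set.uIoc (0:ℝ) 1,
        ‖H (c s) w u - H θh w u‖ ≤ L * ‖w‖ ^ 2 * ‖u‖ * s := by
      intro s hs
      rw [Set.uIoc_of_le (by norm_num : (0:ℝ) ≤ 1)] at hs
      have hs01 : s ∈ Set.Icc (0:ℝ) 1 := ⟨hs.1.le, hs.2⟩
      have := hLip θh hθhS (c s) (hcmem s hs01) w u
      have hcd : c s - θh = s • w := by simp [hc]
      rw [hcd, norm_smul, Real.norm_eq_abs, abs_of_nonneg hs01.1] at this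
      rw [Real.norm_eq_abs]
      calc |H (c s) w u - H θh w u| ≤ ‖w‖ * ‖u‖ * (s * ‖w‖) * L := this
        _ = L * ‖w‖ ^ 2 * ‖u‖ * s := by ring
    have hgint : IntervalIntegrable (fun s => L * ‖w‖ ^ 2 * ‖u‖ * s) volume 0 1 :=
      (continuous_const.mul continuous_id).intervalIntegrable 0 1
    have hnormle : ‖∫ s in (0:ℝ)..1, (H (c s) w u - H θh w u)‖ ≤
        |∫ s in (0:ℝ)..1, L * ‖w‖ ^ 2 * ‖u‖ * s| := by
      apply intervalIntegral.norm_integral_le_abs_of_norm_le _ hgint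
      filter_upwards [MeasureTheory.ae_restrict_mem measurableSet_uIoc] with s hs
      exact hbound s hs
    have hgval : (∫ s in (0:ℝ)..1, L * ‖w‖ ^ 2 * ‖u‖ * s) = L / 2 * ‖w‖ ^ 2 * ‖u‖ := by
      rw [intervalIntegral.integral_const_mul, integral_id]
      ring
    rw [hgval, abs_of_nonneg (by positivity)] at hnormle
    rw [hFTC] at hnormle
    calc |D x u - D θh u - H θh (x - θh) u|
        = ‖D x u - 1 * H θh w u - (D θh u - 0 * H θh w u)‖ := by
          rw [Real.norm_eq_abs]; congr 1; rw [hw]; ring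
      _ ≤ L / 2 * ‖w‖ ^ 2 * ‖u‖ := hnormle
      _ = L / 2 * ‖x - θh‖ ^ 2 * ‖u‖ := by rw [hw]
  -- abbreviations for the outer step
  set v : E := θ' - θ with hv
  set a : E := θ - θh with ha
  set b : E := θ' - θh with hb
  -- gradient vs fderiv
  have hgrad : (inner ℝ v (gradient ℓ θh) : ℝ) = D θh v := by
    rw [real_inner_comm]
    exact InnerProductSpace.toDual_symm_apply
  -- symmetry of the second derivative
  have hsymm : ∀ u₁ u₂ : E, H θh u₁ u₂ = H θh u₂ u₁ := fun u₁ u₂ =>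
    second_derivative_symmetric (fun y => (hd1 y).hasFDerivAt) (hd2 θh).hasFDerivAt u₁ u₂
  -- rewrite the quadratic term
  have hmid : (2 : ℝ)⁻¹ • (θ' + θ) - θh = a + (2:ℝ)⁻¹ • v := by
    rw [ha, hv]; module
  have hquad : H θh v ((2 : ℝ)⁻¹ • (θ' + θ) - θh) =
      D θh v + H θh a v + 2⁻¹ * H θh v v - D θh v := by
    rw [hsymm v _, hmid]
    simp [ContinuousLinearMap.add_apply, ContinuousLinearMap.smul_apply]
    ring
  -- path
  set p : ℝ → E := fun t => θ + t • v with hp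
  have hps : ∀ t : ℝ, HasDerivAt p v t := by
    intro t
    have h := ((hasDerivAt_id' t).smul_const v).const_add θ
    rw [one_smul] at h
    exact h
  have hpmem : ∀ t ∈ Set.Icc (0:ℝ) 1, p t ∈ S := fun t ht =>
    hconv.add_smul_sub_mem hθS hθ'S ht
  have hpd : ∀ t : ℝ, p t - θh = a + t • v := by
    intro t; rw [hp, ha, hv]; simp; module
  -- Φ and its derivative
  set C1 : ℝ := D θh v with hC1
  set C2 : ℝ := H θh a v with hC2
  set C3 : ℝ := H θh v v with hC3
  have hΦ : ∀ t : ℝ, HasDerivAt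
      (fun t => ℓ (p t) - t * C1 - t * C2 - C3 / 2 * t ^ 2)
      (D (p t) v - C1 - C2 - C3 * t) t := by
    intro t
    have h1 : HasDerivAt (fun t => ℓ (p t)) (D (p t) v) t :=
      (hd1 (p t)).hasFDerivAt.comp_hasDerivAt t (hps t)
    have h2 : HasDerivAt (fun t : ℝ => t * C1) C1 t := by
      simpa using (hasDerivAt_id t).mul_const C1
    have h3 : HasDerivAt (fun t : ℝ => t * C2) C2 t := by
      simpa using (hasDerivAt_id t).mul_const C2
    have h4 : HasDerivAt (fun t : ℝ => C3 / 2 * t ^ 2) (C3 / 2 * (2 * t ^ 1)) t :=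
      (hasDerivAt_pow 2 t).const_mul (C3 / 2)
    have := ((h1.sub h2).sub h3).sub h4
    rw [show D (p t) v - C1 - C2 - C3 * t = D (p t) v - C1 - C2 - C3 / 2 * (2 * t ^ 1) by ring]
    exact this
  have hGcont : Continuous (fun t => D (p t) v - C1 - C2 - C3 * t) := by
    have hpc : Continuous p := continuous_const.add (continuous_id.smul continuous_const)
    exact ((((hD2.continuous.comp hpc).clm_apply continuous_const).sub
      continuous_const).sub continuous_const).sub (continuous_const.mul continuous_id)
  have hGint : IntervalIntegrable (fun t => D (p t) v - C1 - C2 - C3 * t) volume 0 1 :=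
    hGcont.intervalIntegrable 0 1
  have hFTC2 : ∫ t in (0:ℝ)..1, (D (p t) v - C1 - C2 - C3 * t) =
      ℓ θ' - ℓ θ - C1 - C2 - C3 / 2 := by
    have := intervalIntegral.integral_eq_sub_of_hasDerivAt
      (f := fun t => ℓ (p t) - t * C1 - t * C2 - C3 / 2 * t ^ 2)
      (f' := fun t => D (p t) v - C1 - C2 - C3 * t)
      (fun t _ => hΦ t) hGint
    have hp1 : p 1 = θ' := by rw [hp, hv]; simp
    have hp0 : p 0 = θ := by simp [hp]
    rw [this]; simp only [hp1, hp0]; ring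
  -- bound the integrand
  have hCb : (0:ℝ) ≤ L / 2 * (‖a‖ ^ 2 + ‖b‖ ^ 2) * ‖v‖ := by positivity
  have hbnd : ∀ t ∈ Set.uIoc (0:ℝ) 1,
      ‖D (p t) v - C1 - C2 - C3 * t‖ ≤ L / 2 * (‖a‖ ^ 2 + ‖b‖ ^ 2) * ‖v‖ := by
    intro t ht
    rw [Set.uIoc_of_le (by norm_num : (0:ℝ) ≤ 1)] at ht
    have ht01 : t ∈ Set.Icc (0:ℝ) 1 := ⟨ht.1.le, ht.2⟩
    have hHlin : H θh (p t - θh) v = C2 + C3 * t := by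
      rw [hpd t]
      simp [ContinuousLinearMap.add_apply, ContinuousLinearMap.smul_apply, hC2, hC3]
      ring
    have hk := key (p t) (hpmem t ht01) v
    have heq : D (p t) v - C1 - C2 - C3 * t
        = D (p t) v - D θh v - H θh (p t - θh) v := by
      rw [hHlin, hC1]; ring
    rw [Real.norm_eq_abs, heq]
    refine hk.trans ?_
    have hnorm : ‖p t - θh‖ ≤ (1 - t) * ‖a‖ + t * ‖b‖ := by
      have : p t - θh = (1 - t) • a + t • b := by
        rw [hpd t, ha, hb, hv]; module
      rw [this]
      refine (norm_add_le _ _).trans ?_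
      rw [norm_smul, norm_smul, Real.norm_eq_abs, Real.norm_eq_abs,
        abs_of_nonneg (by linarith [ht01.2] : (0:ℝ) ≤ 1 - t), abs_of_nonneg ht01.1]
    have hsq : ‖p t - θh‖ ^ 2 ≤ ‖a‖ ^ 2 + ‖b‖ ^ 2 :=
      sq_combo_le t ‖a‖ ‖b‖ ‖p t - θh‖ ht01.1 ht01.2 (norm_nonneg a) (norm_nonneg b)
        (norm_nonneg _) hnorm
    have := mul_le_mul_of_nonneg_right (mul_le_mul_of_nonneg_left hsq
      (by positivity : (0:ℝ) ≤ L / 2)) (norm_nonneg v)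
    linarith
  have hmain : ‖∫ t in (0:ℝ)..1, (D (p t) v - C1 - C2 - C3 * t)‖ ≤
      L / 2 * (‖a‖ ^ 2 + ‖b‖ ^ 2) * ‖v‖ * |1 - 0| :=
    intervalIntegral.norm_integral_le_of_norm_le_const hbnd
  rw [hFTC2, Real.norm_eq_abs] at hmain
  -- assemble
  have hLHS : ℓ θ' - ℓ θ - ((inner ℝ v (gradient ℓ θh) : ℝ) +
      H θh v ((2 : ℝ)⁻¹ • (θ' + θ) - θh)) = ℓ θ' - ℓ θ - C1 - C2 - C3 / 2 := by
    rw [hgrad, hquad, hC1, hC2, hC3]; ring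
  rw [hLHS]
  have habs : |1 - 0| = (1:ℝ) := by norm_num
  rw [habs, mul_one] at hmain
  have h3 : (0:ℝ) ≤ L / 12 * ‖v‖ ^ 3 := by positivity
  have hring : L / 2 * (‖a‖ ^ 2 + ‖b‖ ^ 2) * ‖v‖
      = L / 2 * ‖v‖ * ‖a‖ ^ 2 + L / 2 * ‖v‖ * ‖b‖ ^ 2 := by ring
  linarith
end

section
/- Define T(η) = φ(η)(φ(η) + ηΦ(η))/Φ(η)², where φ and Φ are the standard normal pdf and cdf. Then T is strictly decreasing on ℝ, with lim_{η→−∞} T(η) = 1 and lim_{η→∞} T(η) = 0; consequently 0 ≤ T(η) ≤ 1 for all η. -/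
open Real MeasureTheory Filter Set Topology intervalIntegral

noncomputable def phi (t : ℝ) : ℝ := (Real.sqrt (2 * π))⁻¹ * Real.exp (-t ^ 2 / 2)
noncomputable def Phi (η : ℝ) : ℝ := ∫ t in Set.Iic η, phi t


lemma phi_pos (t : ℝ) : 0 < phi t := by
  have : (0:ℝ) < Real.sqrt (2 * π) := Real.sqrt_pos.2 (by positivity)
  exact mul_pos (inv_pos.2 this) (Real.exp_pos _)

lemma continuous_phi : Continuous phi := by
  unfold phi; fun_prop

lemma integrable_phi : Integrable phi := by
  unfold phi
  apply Integrable.const_mul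
  have h := integrable_exp_neg_mul_sq (b := (1/2 : ℝ)) (by norm_num)
  convert h using 2 with t
  ring_nf

lemma integral_phi : ∫ t, phi t = 1 := by
  unfold phi
  rw [MeasureTheory.integral_const_mul]
  have h := integral_gaussian (1/2 : ℝ)
  have h2 : ∫ x : ℝ, Real.exp (-x ^ 2 / 2) = Real.sqrt (2 * π) := by
    rw [show (fun x : ℝ => Real.exp (-x ^ 2 / 2)) = fun x : ℝ => Real.exp (-(1/2) * x ^ 2) by
      funext x; ring_nf, h]
    rw [show π / (1/2) = 2 * π by ring]
  rw [h2]
  field_simp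

lemma hasDerivAt_phi (t : ℝ) : HasDerivAt phi (-t * phi t) t := by
  have h1 : HasDerivAt (fun x : ℝ => -x ^ 2 / 2) (-t) t := by
    have := ((hasDerivAt_pow 2 t).neg).div_const 2
    simpa using this.congr_deriv (by ring)
  have h2 := (h1.exp).const_mul (Real.sqrt (2 * π))⁻¹
  unfold phi
  exact h2.congr_deriv (by ring)

lemma Phi_pos (η : ℝ) : 0 < Phi η := by
  unfold Phi
  rw [MeasureTheory.setIntegral_pos_iff_support_of_nonneg_ae]
  · have : Function.support phi = Set.univ := by
      ext t; simp [Function.support, (phi_pos t).ne']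
    rw [this, Set.univ_inter]
    simp [Real.volume_Iic]
  · exact Filter.Eventually.of_forall (fun t => (phi_pos t).le)
  · exact integrable_phi.integrableOn

lemma Phi_sub_Phi (a b : ℝ) : Phi b - Phi a = ∫ t in a..b, phi t := by
  unfold Phi
  rw [intervalIntegral.integral_Iic_sub_Iic integrable_phi.integrableOn integrable_phi.integrableOn]

lemma hasDerivAt_Phi (η : ℝ) : HasDerivAt Phi (phi η) η := by
  have h : HasDerivAt (fun u => ∫ t in (0:ℝ)..u, phi t) (phi η) η := by
    exact intervalIntegral.integral_hasDerivAt_right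
      integrable_phi.intervalIntegrable
      continuous_phi.stronglyMeasurable.stronglyMeasurableAtFilter
      continuous_phi.continuousAt
  have : Phi = fun u => Phi 0 + ∫ t in (0:ℝ)..u, phi t := by
    funext u; rw [← Phi_sub_Phi]; ring
  rw [this]
  simpa using (h.const_add (Phi 0))

lemma Phi_tendsto_one : Tendsto Phi atTop (𝓝 1) := by
  have h : Tendsto (fun b => ∫ t in Set.Iic b, phi t) atTop (𝓝 (∫ t, phi t)) := by
    exact (MeasureTheory.aecover_Iic tendsto_id).integral_tendsto_of_countably_generated
      integrable_phi
  rw [integral_phi] at h; exact h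



lemma sqrt2pi_pos : (0:ℝ) < Real.sqrt (2*π) := Real.sqrt_pos.2 (by positivity)

lemma tendsto_exp_neg_sq_atTop : Tendsto (fun η : ℝ => Real.exp (-η^2/2)) atTop (𝓝 0) := by
  apply Real.tendsto_exp_atBot.comp
  apply Tendsto.atBot_div_const (by norm_num)
  exact tendsto_neg_atBot_iff.mpr (tendsto_pow_atTop (by norm_num))

lemma tendsto_phi_atTop : Tendsto phi atTop (𝓝 0) := by
  have := tendsto_exp_neg_sq_atTop.const_mul (Real.sqrt (2*π))⁻¹
  rw [mul_zero] at this
  exact this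

lemma tendsto_phi_atBot : Tendsto phi atBot (𝓝 0) := by
  have h : Tendsto (fun η : ℝ => phi (-η)) atTop (𝓝 0) := by
    exact tendsto_phi_atTop.congr (fun x => show phi x = phi (-x) by unfold phi; rw [neg_sq])
  have := h.comp tendsto_neg_atBot_atTop
  exact this.congr (fun x => by simp [Function.comp])

lemma tendsto_mul_phi_atTop : Tendsto (fun η => η * phi η) atTop (𝓝 0) := by
  have hb : Tendsto (fun η : ℝ => (Real.sqrt (2*π))⁻¹ * (η * Real.exp (-η))) atTop (𝓝 0) := by
    have := (tendsto_pow_mul_exp_neg_atTop_nhds_zero 1).const_mul (Real.sqrt (2*π))⁻¹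
    simpa using this
  apply squeeze_zero_norm' _ hb
  filter_upwards [eventually_ge_atTop (2:ℝ)] with η hη
  have h2 : Real.exp (-η^2/2) ≤ Real.exp (-η) := by
    apply Real.exp_le_exp.2; nlinarith
  have hpos : (0:ℝ) < (Real.sqrt (2*π))⁻¹ := inv_pos.2 sqrt2pi_pos
  have hle : η * phi η ≤ (Real.sqrt (2*π))⁻¹ * (η * Real.exp (-η)) := by
    unfold phi
    rw [show (Real.sqrt (2*π))⁻¹ * (η * Real.exp (-η)) = η * ((Real.sqrt (2*π))⁻¹ * Real.exp (-η)) by ring]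
    apply mul_le_mul_of_nonneg_left _ (by linarith)
    exact mul_le_mul_of_nonneg_left h2 hpos.le
  have hnn : (0:ℝ) ≤ η * phi η := mul_nonneg (by linarith) (phi_pos η).le
  rw [Real.norm_eq_abs, abs_of_nonneg hnn]
  exact hle

lemma Phi_le_exp {η : ℝ} (hη : η ≤ -2) : Phi η ≤ (Real.sqrt (2*π))⁻¹ * Real.exp η := by
  have hb : ∀ t ∈ Set.Iic η, phi t ≤ (Real.sqrt (2*π))⁻¹ * Real.exp t := by
    intro t ht
    simp only [Set.mem_Iic] at ht
    have ht2 : t ≤ -2 := ht.trans hη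
    unfold phi
    have : -t^2/2 ≤ t := by nlinarith
    exact mul_le_mul_of_nonneg_left (Real.exp_le_exp.2 this) (by positivity)
  calc Phi η ≤ ∫ t in Set.Iic η, (Real.sqrt (2*π))⁻¹ * Real.exp t := by
        apply setIntegral_mono_on integrable_phi.integrableOn
          ((integrableOn_exp_Iic η).const_mul _) measurableSet_Iic hb
    _ = (Real.sqrt (2*π))⁻¹ * Real.exp η := by
        rw [MeasureTheory.integral_const_mul, integral_exp_Iic]

lemma tendsto_Phi_atBot : Tendsto Phi atBot (𝓝 0) := by
  apply squeeze_zero' (Filter.Eventually.of_forall (fun η => (Phi_pos η).le))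
  · filter_upwards [eventually_le_atBot (-2:ℝ)] with η hη
    exact Phi_le_exp hη
  · have h : Tendsto (fun η : ℝ => Real.exp η) atBot (𝓝 0) := Real.tendsto_exp_atBot
    simpa using h.const_mul (Real.sqrt (2*π))⁻¹

lemma tendsto_mul_Phi_atBot : Tendsto (fun η => η * Phi η) atBot (𝓝 0) := by
  have hb : Tendsto (fun η : ℝ => (Real.sqrt (2*π))⁻¹ * (-η * Real.exp η)) atBot (𝓝 0) := by
    have h1 : Tendsto (fun x : ℝ => (Real.sqrt (2*π))⁻¹ * (x * Real.exp (-x))) atTop (𝓝 0) := by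
      have := (tendsto_pow_mul_exp_neg_atTop_nhds_zero 1).const_mul (Real.sqrt (2*π))⁻¹
      simpa using this
    have := h1.comp tendsto_neg_atBot_atTop
    exact this.congr (fun x => by simp [Function.comp])
  apply squeeze_zero_norm' _ hb
  filter_upwards [eventually_le_atBot (-2:ℝ)] with η hη
  have h1 := Phi_le_exp hη
  have h2 := Phi_pos η
  have hpos : (0:ℝ) < (Real.sqrt (2*π))⁻¹ := inv_pos.2 sqrt2pi_pos
  rw [Real.norm_eq_abs, abs_of_nonpos (by nlinarith : η * Phi η ≤ 0)]
  have hexp := Real.exp_pos η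
  nlinarith

lemma tendsto_Phi_atTop : Tendsto Phi atTop (𝓝 1) := by
  have h : Tendsto (fun b => ∫ t in Set.Iic b, phi t) atTop (𝓝 (∫ t, phi t)) :=
    (MeasureTheory.aecover_Iic tendsto_id).integral_tendsto_of_countably_generated integrable_phi
  rw [integral_phi] at h; exact h



lemma hasDerivAt_sqrt_sq_add (c : ℝ) (hc : 0 < c) (x : ℝ) :
    HasDerivAt (fun t => Real.sqrt (t^2 + c)) (x / Real.sqrt (x^2 + c)) x := by
  have hpos : (0:ℝ) < x^2 + c := by positivity
  have h1 : HasDerivAt (fun t : ℝ => t^2 + c) (2*x) x := by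
    simpa using (hasDerivAt_pow 2 x).add_const c
  have h2 := (Real.hasDerivAt_sqrt hpos.ne').comp x h1
  exact h2.congr_deriv (by field_simp)

lemma sqrt_sq_add_pos (c x : ℝ) (hc : 0 < c) : 0 < Real.sqrt (x^2 + c) :=
  Real.sqrt_pos.2 (by positivity)

lemma sq_sqrt_sq_add (c x : ℝ) (hc : 0 < c) : (Real.sqrt (x^2 + c))^2 = x^2 + c :=
  Real.sq_sqrt (by positivity)

lemma sqrt_sq_add_gt (c x : ℝ) (hc : 0 < c) : -x < Real.sqrt (x^2 + c) ∧ x < Real.sqrt (x^2 + c) := by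
  have h1 := sqrt_sq_add_pos c x hc
  have h2 := sq_sqrt_sq_add c x hc
  constructor <;> nlinarith [sq_nonneg (Real.sqrt (x^2+c) + x), sq_nonneg (Real.sqrt (x^2+c) - x)]

/-- Mills upper bound: `φ(η)·(η+√(η²+4))/2 < Φ(η)`. -/
lemma A_lt (η : ℝ) : phi η * ((η + Real.sqrt (η^2 + 4)) / 2) < Phi η := by
  set A : ℝ → ℝ := fun x => Phi x - phi x * ((x + Real.sqrt (x^2 + 4)) / 2) with hA
  have hd : ∀ x : ℝ, HasDerivAt A
      (phi x - ((-x * phi x) * ((x + Real.sqrt (x^2 + 4)) / 2)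
        + phi x * ((1 + x / Real.sqrt (x^2 + 4)) / 2))) x := by
    intro x
    have h1 : HasDerivAt (fun t : ℝ => (t + Real.sqrt (t^2 + 4)) / 2)
        ((1 + x / Real.sqrt (x^2 + 4)) / 2) x :=
      ((hasDerivAt_id x).add (hasDerivAt_sqrt_sq_add 4 (by norm_num) x)).div_const 2
    exact (hasDerivAt_Phi x).sub ((hasDerivAt_phi x).mul h1)
  have hderiv_pos : ∀ x : ℝ, 0 < phi x - ((-x * phi x) * ((x + Real.sqrt (x^2 + 4)) / 2)
        + phi x * ((1 + x / Real.sqrt (x^2 + 4)) / 2)) := by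
    intro x
    set a := Real.sqrt (x^2 + 4) with hadef
    have ha : 0 < a := sqrt_sq_add_pos 4 x (by norm_num)
    have ha2 : a^2 = x^2 + 4 := sq_sqrt_sq_add 4 x (by norm_num)
    have hphi := phi_pos x
    have hexpr : phi x - ((-x * phi x) * ((x + a) / 2) + phi x * ((1 + x / a) / 2))
        = phi x * ((a * (1 + x^2) + x * (a^2 - 1)) / (2*a)) := by
      field_simp
      ring
    rw [hexpr, ha2]
    apply mul_pos hphi
    apply div_pos _ (by linarith)
    -- a(1+x²) + x³+3x > 0, using (a(1+x²))² - (x(x²+3))² = 4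
    have hX : 0 < a * (1 + x^2) := by positivity
    have hid : (a * (1 + x^2))^2 - (x * (x^2 + 3))^2 = 4 := by
      rw [mul_pow, ha2]; ring
    nlinarith [hX, hid, sq_nonneg (a * (1 + x^2) + x * (x^2+3))]
  have hmono : StrictMono A := by
    apply strictMono_of_deriv_pos
    intro x
    rw [(hd x).deriv]
    exact hderiv_pos x
  have hlim : Tendsto A atBot (𝓝 0) := by
    have h2 : Tendsto (fun x => phi x * ((x + Real.sqrt (x^2 + 4)) / 2)) atBot (𝓝 0) := by
      refine squeeze_zero' ?_ ?_ tendsto_phi_atBot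
      · filter_upwards with x
        have ha := sqrt_sq_add_gt 4 x (by norm_num)
        have := phi_pos x
        nlinarith [this, ha.1]
      · filter_upwards [eventually_le_atBot (-2 : ℝ)] with x hx
        have ha : 0 < Real.sqrt (x^2+4) := sqrt_sq_add_pos 4 x (by norm_num)
        have ha2 := sq_sqrt_sq_add 4 x (by norm_num)
        have hq : (x + Real.sqrt (x^2 + 4)) / 2 ≤ 1 := by nlinarith
        nlinarith [phi_pos x]
    simpa using tendsto_Phi_atBot.sub h2
  have hnonneg : ∀ x : ℝ, 0 ≤ A x := by
    intro x
    apply le_of_tendsto hlim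
    filter_upwards [eventually_le_atBot x] with y hy
    exact (hmono.le_iff_le).2 hy
  have hfin : 0 < A η := lt_of_le_of_lt (hnonneg (η - 1)) (hmono (by linarith))
  simp only [hA] at hfin
  linarith

/-- Mills lower bound: `Φ(η)·(√(η²+8) - 3η) < 4φ(η)`. -/
lemma B_lt (η : ℝ) : Phi η * (Real.sqrt (η^2 + 8) - 3*η) < 4 * phi η := by
  set B : ℝ → ℝ := fun x => 4 * phi x - Phi x * (Real.sqrt (x^2 + 8) - 3*x) with hB
  have hd : ∀ x : ℝ, HasDerivAt B
      (4 * (-x * phi x) - (phi x * (Real.sqrt (x^2 + 8) - 3*x)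
        + Phi x * (x / Real.sqrt (x^2 + 8) - 3))) x := by
    intro x
    have h1 : HasDerivAt (fun t : ℝ => Real.sqrt (t^2 + 8) - 3*t)
        (x / Real.sqrt (x^2 + 8) - 3) x := by
      have := (hasDerivAt_sqrt_sq_add 8 (by norm_num) x).sub
        ((hasDerivAt_id x).const_mul 3)
      simpa [mul_comm, Pi.sub_def] using this
    exact ((hasDerivAt_phi x).const_mul 4).sub ((hasDerivAt_Phi x).mul h1)
  have hderiv_pos : ∀ x : ℝ, 0 < 4 * (-x * phi x) - (phi x * (Real.sqrt (x^2 + 8) - 3*x)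
        + Phi x * (x / Real.sqrt (x^2 + 8) - 3)) := by
    intro x
    set a := Real.sqrt (x^2 + 4) with hadef
    set b := Real.sqrt (x^2 + 8) with hbdef
    have ha : 0 < a := sqrt_sq_add_pos 4 x (by norm_num)
    have hb : 0 < b := sqrt_sq_add_pos 8 x (by norm_num)
    have ha2 : a^2 = x^2 + 4 := sq_sqrt_sq_add 4 x (by norm_num)
    have hb2 : b^2 = x^2 + 8 := sq_sqrt_sq_add 8 x (by norm_num)
    have hax := sqrt_sq_add_gt 4 x (by norm_num)
    have hbx := sqrt_sq_add_gt 8 x (by norm_num)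
    have hphi := phi_pos x
    have hPhi := Phi_pos x
    have hA := A_lt x
    -- key: 2a + x > b
    have h2axb : b < 2*a + x := by nlinarith [hax.1, hax.2]
    -- key: 0 < 3ab + bx - ax - 3x² - 16
    have hprod : (3*a*b + b*x - a*x - 3*x^2 - 16) * (a + b) = 4*(2*a + x - b) := by
      linear_combination (3*b - x) * ha2 + (3*a + x) * hb2
    have hkey : 0 < 3*a*b + b*x - a*x - 3*x^2 - 16 := by
      nlinarith [hprod, h2axb, ha, hb]
    -- numerator positivity: Φ(3b-x) > φ·b·(x+b)
    have hnum : 0 < -(phi x) * b * (x + b) + Phi x * (3*b - x) := by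
      have h3bx : 0 < 3*b - x := by nlinarith [hbx.2]
      have hchain : phi x * ((x + a)/2) * (3*b - x) < Phi x * (3*b - x) :=
        (mul_lt_mul_of_pos_right hA h3bx)
      have hq : phi x * b * (x + b) ≤ phi x * ((x + a)/2) * (3*b - x) := by
        have h9 : b * (x + b) ≤ ((x + a)/2) * (3*b - x) := by nlinarith [hkey]
        nlinarith [mul_le_mul_of_nonneg_left h9 hphi.le]
      nlinarith [hchain, hq]
    have hexpr : 4 * (-x * phi x) - (phi x * (b - 3*x) + Phi x * (x / b - 3))
        = (-(phi x) * b * (x + b) + Phi x * (3*b - x)) / b := by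
      field_simp
      ring
    rw [hexpr]
    exact div_pos hnum hb
  have hmono : StrictMono B := by
    apply strictMono_of_deriv_pos
    intro x
    rw [(hd x).deriv]
    exact hderiv_pos x
  have hlim : Tendsto B atBot (𝓝 0) := by
    have h2 : Tendsto (fun x => Phi x * (Real.sqrt (x^2 + 8) - 3*x)) atBot (𝓝 0) := by
      refine squeeze_zero' (g := fun x => -4 * (x * Phi x) + 3 * Phi x) ?_ ?_ ?_
      · filter_upwards [eventually_le_atBot (0 : ℝ)] with x hx
        have hbx := sqrt_sq_add_gt 8 x (by norm_num)
        nlinarith [Phi_pos x, hbx.2]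
      · filter_upwards [eventually_le_atBot (0 : ℝ)] with x hx
        have hb : 0 < Real.sqrt (x^2+8) := sqrt_sq_add_pos 8 x (by norm_num)
        have hb2 := sq_sqrt_sq_add 8 x (by norm_num)
        have hble : Real.sqrt (x^2+8) ≤ -x + 3 := by nlinarith
        have := Phi_pos x
        calc Phi x * (Real.sqrt (x^2 + 8) - 3*x) ≤ Phi x * (-x + 3 - 3*x) := by nlinarith
          _ = -4 * (x * Phi x) + 3 * Phi x := by ring
      · have := (tendsto_mul_Phi_atBot.const_mul (-4)).add (tendsto_Phi_atBot.const_mul 3)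
        simpa using this
    have := ((tendsto_phi_atBot.const_mul 4).sub h2)
    simpa using this
  have hnonneg : ∀ x : ℝ, 0 ≤ B x := by
    intro x
    apply le_of_tendsto hlim
    filter_upwards [eventually_le_atBot x] with y hy
    exact (hmono.le_iff_le).2 hy
  have hfin : 0 < B η := lt_of_le_of_lt (hnonneg (η - 1)) (hmono (by linarith))
  simp only [hB] at hfin
  linarith


lemma sum_pos (η : ℝ) : 0 < phi η + η * Phi η := by
  have hB := B_lt η
  have hb := sqrt_sq_add_gt 8 η (by norm_num)
  have hPhi := Phi_pos η
  nlinarith [mul_pos hPhi (show (0:ℝ) < Real.sqrt (η^2+8) + η by linarith [hb.1])]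

lemma num_lt_den (η : ℝ) : phi η * (phi η + η * Phi η) < (Phi η)^2 := by
  have hA := A_lt η
  set a := Real.sqrt (η^2 + 4) with ha_def
  have ha : 0 < a := sqrt_sq_add_pos 4 η (by norm_num)
  have ha2 : a^2 = η^2 + 4 := sq_sqrt_sq_add 4 η (by norm_num)
  have hphi := phi_pos η
  have h1 : phi η * a < 2 * Phi η - η * phi η := by nlinarith [hA]
  have h2 : (0:ℝ) < phi η * a := mul_pos hphi ha
  have h3 : (phi η * a)^2 < (2 * Phi η - η * phi η)^2 := by nlinarith [h1, h2]
  nlinarith [h3, ha2]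

lemma quad_pos (η : ℝ) :
    0 < 2*(phi η)^2 + 3*η*(phi η)*(Phi η) + (η^2 - 1)*(Phi η)^2 := by
  have hB := B_lt η
  set b := Real.sqrt (η^2 + 8) with hb_def
  have hb : 0 < b := sqrt_sq_add_pos 8 η (by norm_num)
  have hb2 : b^2 = η^2 + 8 := sq_sqrt_sq_add 8 η (by norm_num)
  have hPhi := Phi_pos η
  have h1 : Phi η * b < 4 * phi η + 3*η*Phi η := by nlinarith [hB]
  have h2 : (0:ℝ) < Phi η * b := mul_pos hPhi hb
  have h3 : (Phi η * b)^2 < (4 * phi η + 3*η*Phi η)^2 := by nlinarith [h1, h2]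
  nlinarith [h3, hb2]

lemma T_lb (η : ℝ) :
    (Real.sqrt (η^2+8) - 3*η) * (Real.sqrt (η^2+8) + η) / 16 * (Phi η)^2
      < phi η * (phi η + η * Phi η) := by
  set b := Real.sqrt (η^2 + 8) with hb_def
  have hb := sqrt_sq_add_gt 8 η (by norm_num)
  have hPhi := Phi_pos η
  have hphi := phi_pos η
  have h1 : 0 < phi η - (b - 3*η)/4 * Phi η := by nlinarith [B_lt η]
  have h2 : 0 < phi η + (b + η)/4 * Phi η := by
    have : 0 < b + η := by linarith [hb.1]
    positivity
  nlinarith [mul_pos h1 h2]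

noncomputable def Tfun : ℝ → ℝ := fun η => phi η * (phi η + η * Phi η) / (Phi η)^2

lemma hasDerivAt_Tfun (η : ℝ) : HasDerivAt Tfun
    ((((-η * phi η) * (phi η + η * Phi η)
        + phi η * ((-η * phi η) + (1 * Phi η + η * phi η))) * (Phi η)^2
      - phi η * (phi η + η * Phi η) * ((2:ℕ) * Phi η ^ 1 * phi η)) / ((Phi η)^2)^2) η := by
  have hN : HasDerivAt (fun x => phi x * (phi x + x * Phi x))
      ((-η * phi η) * (phi η + η * Phi η)
        + phi η * ((-η * phi η) + (1 * Phi η + η * phi η))) η :=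
    (hasDerivAt_phi η).mul ((hasDerivAt_phi η).add
      ((hasDerivAt_id η).mul (hasDerivAt_Phi η)))
  have hD : HasDerivAt (fun x => (Phi x)^2) ((2:ℕ) * Phi η ^ 1 * phi η) η :=
    (hasDerivAt_Phi η).pow 2
  exact hN.div hD (by have := Phi_pos η; positivity)

lemma strictAnti_Tfun : StrictAnti Tfun := by
  apply strictAnti_of_deriv_neg
  intro η
  rw [(hasDerivAt_Tfun η).deriv]
  apply div_neg_of_neg_of_pos
  · have h := quad_pos η
    have hPhi := Phi_pos η
    have hphi := phi_pos η
    have key : ((-η * phi η) * (phi η + η * Phi η)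
        + phi η * ((-η * phi η) + (1 * Phi η + η * phi η))) * (Phi η)^2
      - phi η * (phi η + η * Phi η) * ((2:ℕ) * Phi η ^ 1 * phi η)
      = -(Phi η * phi η * (2*(phi η)^2 + 3*η*(phi η)*(Phi η) + (η^2 - 1)*(Phi η)^2)) := by
      push_cast
      ring
    rw [key]
    nlinarith [mul_pos (mul_pos hPhi hphi) h]
  · have := Phi_pos η; positivity

lemma Tfun_mem_Icc (η : ℝ) : Tfun η ∈ Set.Icc (0:ℝ) 1 := by
  have hPhi := Phi_pos η
  constructor
  · exact le_of_lt (div_pos (mul_pos (phi_pos η) (sum_pos η)) (by positivity))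
  · exact le_of_lt ((div_lt_one (by positivity)).2 (num_lt_den η))

lemma tendsto_Tfun_atTop : Tendsto Tfun atTop (𝓝 0) := by
  have hnum : Tendsto (fun η => phi η * (phi η + η * Phi η)) atTop (𝓝 0) := by
    have h1 : Tendsto (fun η => phi η * phi η + (η * phi η) * Phi η) atTop
        (𝓝 (0 * 0 + 0 * 1)) :=
      ((tendsto_phi_atTop.mul tendsto_phi_atTop).add
        (tendsto_mul_phi_atTop.mul tendsto_Phi_atTop))
    simp only [mul_zero, zero_mul, zero_add, add_zero] at h1
    exact h1.congr (fun η => by ring)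
  have hden : Tendsto (fun η => (Phi η)^2) atTop (𝓝 1) := by
    have := tendsto_Phi_atTop.mul tendsto_Phi_atTop
    simp only [mul_one] at this
    exact this.congr (fun η => by ring)
  have := hnum.div hden (by norm_num)
  rw [zero_div] at this
  exact this

lemma tendsto_Tfun_atBot : Tendsto Tfun atBot (𝓝 1) := by
  -- first: η * (η + √(η²+8)) → -4 at -∞
  have hsq : Tendsto (fun η : ℝ => 8 / η^2) atBot (𝓝 0) := by
    have h2 : Tendsto (fun η : ℝ => η^2) atBot atTop := by
      have h3 : Tendsto (fun η : ℝ => η^2) atTop atTop := tendsto_pow_atTop two_ne_zero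
      have h4 := h3.comp tendsto_neg_atBot_atTop
      exact h4.congr fun x => by simp [Function.comp]
    exact Tendsto.div_atTop tendsto_const_nhds h2
  have hden0 : -Real.sqrt (1 + 0) - 1 = -2 := by
    norm_num
  have hc1 : Continuous fun u : ℝ => -Real.sqrt (1+u) - 1 := by
    fun_prop
  have hg : ContinuousAt (fun u : ℝ => 8 / (-Real.sqrt (1 + u) - 1)) 0 :=
    continuousAt_const.div hc1.continuousAt (by rw [hden0]; norm_num)
  have hcomp : Tendsto (fun η : ℝ => 8 / (-Real.sqrt (1 + 8/η^2) - 1)) atBot (𝓝 (-4)) := by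
    have h := hg.tendsto.comp hsq
    simp only [Function.comp_def] at h
    rw [hden0] at h
    norm_num at h
    exact h
  have hev : ∀ᶠ η in atBot, 8 / (-Real.sqrt (1 + 8/η^2) - 1)
      = η * (η + Real.sqrt (η^2 + 8)) := by
    filter_upwards [eventually_lt_atBot (0:ℝ)] with η hη
    have hb : 0 < Real.sqrt (η^2+8) := sqrt_sq_add_pos 8 η (by norm_num)
    have hb2 : (Real.sqrt (η^2+8))^2 = η^2 + 8 := sq_sqrt_sq_add 8 η (by norm_num)
    have hη0 : η ≠ 0 := ne_of_lt hη
    have hs : Real.sqrt (1 + 8/η^2) = Real.sqrt (η^2+8) / (-η) := by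
      rw [show 1 + 8/η^2 = (η^2+8)/η^2 by field_simp]
      rw [Real.sqrt_div (by positivity) _, Real.sqrt_sq_eq_abs, abs_of_neg hη]
    rw [hs]
    have hbη : 0 < Real.sqrt (η^2+8) - η := by linarith
    have hD : -(Real.sqrt (η^2+8) / (-η)) - 1 = (Real.sqrt (η^2+8) - η) / η := by
      field_simp
    rw [hD, div_div_eq_mul_div, div_eq_iff (ne_of_gt hbη)]
    linear_combination (-η) * hb2
  have hlim1 : Tendsto (fun η : ℝ => η * (η + Real.sqrt (η^2 + 8))) atBot (𝓝 (-4)) :=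
    Tendsto.congr' hev hcomp
  -- lower bound function tends to 1
  have hLb : Tendsto (fun η : ℝ =>
      (Real.sqrt (η^2+8) - 3*η) * (Real.sqrt (η^2+8) + η) / 16) atBot (𝓝 1) := by
    have h1 : Tendsto (fun η : ℝ => (8 - 2 * (η * (η + Real.sqrt (η^2 + 8)))) / 16) atBot
        (𝓝 ((8 - 2 * (-4)) / 16)) :=
      ((tendsto_const_nhds.sub (hlim1.const_mul 2)).div_const 16)
    norm_num at h1
    apply h1.congr
    intro η
    have hb2 : (Real.sqrt (η^2+8))^2 = η^2 + 8 := sq_sqrt_sq_add 8 η (by norm_num)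
    linear_combination -hb2 / 16
  -- squeeze
  apply tendsto_of_tendsto_of_tendsto_of_le_of_le hLb tendsto_const_nhds
  · intro η
    have hPhi := Phi_pos η
    have := T_lb η
    rw [Tfun, le_div_iff₀ (by positivity)]
    linarith [this]
  · intro η
    exact (Tfun_mem_Icc η).2

/-- Probit curvature function `T(η) = φ(η)(φ(η) + ηΦ(η))/Φ(η)²`, where `φ` and
`Φ` are the standard normal pdf and cdf, is strictly decreasing with limits `1`
at `−∞` and `0` at `∞`; consequently `0 ≤ T ≤ 1`. -/
theorem stmt_15 :
    let npdf : ℝ → ℝ := fun t => (Real.sqrt (2 * π))⁻¹ * Real.exp (-t ^ 2 / 2)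
    let ncdf : ℝ → ℝ := fun η => ∫ t in Set.Iic η, npdf t
    let T : ℝ → ℝ := fun η => npdf η * (npdf η + η * ncdf η) / (ncdf η) ^ 2
    StrictAnti T ∧ Filter.Tendsto T Filter.atBot (nhds 1) ∧
      Filter.Tendsto T Filter.atTop (nhds 0) ∧
      ∀ η : ℝ, T η ∈ Set.Icc (0 : ℝ) 1 := by
  intro npdf ncdf T
  have hT : T = Tfun := rfl
  rw [hT]
  exact ⟨strictAnti_Tfun, tendsto_Tfun_atBot, tendsto_Tfun_atTop, Tfun_mem_Icc⟩
end

section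
/- For the Poisson regression log-likelihood h(η) = y log log(1+e^η) − log(1+e^η) − log(y!) with y a nonnegative integer, h'(η) = y·S(η) − e^η/(1+e^η) where S(η) = e^η/((1+e^η)log(1+e^η)), is strictly decreasing in η with limits y as η → −∞ and −1 as η → ∞; hence |h'(η)| ≤ max(1, y) for all η ∈ ℝ. -/
open Real Filter

noncomputable def gg (t : ℝ) : ℝ := (t - 1) / (t * Real.log t)

lemma gg_hasDerivAt {t : ℝ} (ht : 1 < t) :
    HasDerivAt gg ((1 + Real.log t - t) / (t * Real.log t)^2) t := by
  have h0 : t ≠ 0 := by linarith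
  have hl : Real.log t ≠ 0 := ne_of_gt (Real.log_pos ht)
  have hv : t * Real.log t ≠ 0 := mul_ne_zero h0 hl
  have h1 : HasDerivAt (fun t : ℝ => t - 1) 1 t := (hasDerivAt_id t).sub_const 1
  have h2 : HasDerivAt (fun t : ℝ => t * Real.log t) (Real.log t + 1) t := by
    have := (hasDerivAt_id t).mul (Real.hasDerivAt_log h0)
    refine this.congr_deriv ?_
    simp [h0]
  have h3 := h1.div h2 hv
  refine h3.congr_deriv ?_
  ring

lemma gg_anti : StrictAntiOn gg (Set.Ioi 1) := by
  have hcont : ContinuousOn gg (Set.Ioi 1) := fun x hx =>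
    (gg_hasDerivAt hx).continuousAt.continuousWithinAt
  refine strictAntiOn_of_deriv_neg (convex_Ioi 1) hcont ?_
  intro x hx
  rw [interior_Ioi] at hx
  rw [(gg_hasDerivAt hx).deriv]
  have hx' : (1:ℝ) < x := hx
  have h1 : Real.log x + 1 < x := by
    have := Real.add_one_lt_exp (ne_of_gt (Real.log_pos hx'))
    rwa [Real.exp_log (by linarith)] at this
  have h2 : (0:ℝ) < (x * Real.log x)^2 :=
    pow_pos (mul_pos (by linarith) (Real.log_pos hx')) 2
  apply div_neg_of_neg_of_pos _ h2
  linarith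

/-- For the Poisson regression log-likelihood with mean `log(1+e^η)`, the
derivative `h'(η) = y·S(η) − e^η/(1+e^η)`, with
`S(η) = e^η/((1+e^η)log(1+e^η))`, is strictly decreasing with limits `y` at
`−∞` and `−1` at `∞`; hence `|h'(η)| ≤ max(1, y)` for all `η`. -/
theorem stmt_18 (y : ℕ) :
    let S : ℝ → ℝ :=
      fun η => Real.exp η / ((1 + Real.exp η) * Real.log (1 + Real.exp η))
    let h' : ℝ → ℝ := fun η => (y : ℝ) * S η - Real.exp η / (1 + Real.exp η)
    StrictAnti h' ∧ Filter.Tendsto h' Filter.atBot (nhds (y : ℝ)) ∧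
      Filter.Tendsto h' Filter.atTop (nhds (-1)) ∧
      ∀ η : ℝ, |h' η| ≤ max 1 (y : ℝ) := by
  intro S h'
  have hpos : ∀ η : ℝ, (0:ℝ) < 1 + Real.exp η := fun η => by
    have := Real.exp_pos η; linarith
  have hone : ∀ η : ℝ, (1:ℝ) < 1 + Real.exp η := fun η => by
    have := Real.exp_pos η; linarith
  have hlog : ∀ η : ℝ, 0 < Real.log (1 + Real.exp η) :=
    fun η => Real.log_pos (hone η)
  -- S η = gg (1 + exp η)
  have hSg : ∀ η : ℝ, S η = gg (1 + Real.exp η) := fun η => by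
    simp [S, gg, add_sub_cancel_left]
  -- S strictly decreasing
  have hSanti : StrictAnti S := by
    intro a b hab
    rw [hSg a, hSg b]
    exact gg_anti (hone a) (hone b) (by simpa using Real.exp_lt_exp.mpr hab)
  -- f := logistic strictly increasing
  have hfmono : StrictMono (fun η : ℝ => Real.exp η / (1 + Real.exp η)) := by
    intro a b hab
    rw [div_lt_div_iff₀ (hpos a) (hpos b)]
    have := Real.exp_lt_exp.mpr hab
    nlinarith [Real.exp_pos a, Real.exp_pos b]
  have hanti : StrictAnti h' := by
    intro a b hab
    have h1 : (y : ℝ) * S b ≤ (y : ℝ) * S a :=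
      mul_le_mul_of_nonneg_left (le_of_lt (hSanti hab)) (Nat.cast_nonneg y)
    have h2 := hfmono hab
    simp only [h']
    linarith
  -- limits of auxiliary pieces
  have hden_bot : Filter.Tendsto (fun η : ℝ => 1 + Real.exp η) Filter.atBot (nhds 1) := by
    have := (tendsto_const_nhds (x := (1:ℝ)) (f := Filter.atBot)).add Real.tendsto_exp_atBot
    simpa using this
  have hf_bot : Filter.Tendsto (fun η : ℝ => Real.exp η / (1 + Real.exp η))
      Filter.atBot (nhds 0) := by
    have := Real.tendsto_exp_atBot.div hden_bot one_ne_zero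
    simpa [Pi.div_def] using this
  -- exp η / log (1 + exp η) → 1 at atBot
  have hslope : Filter.Tendsto (fun x : ℝ => Real.log (1 + x) / x) (nhdsWithin 0 {(0:ℝ)}ᶜ)
      (nhds 1) := by
    have hd : HasDerivAt (fun x : ℝ => Real.log (1 + x)) 1 0 := by
      have := ((hasDerivAt_id (0:ℝ)).const_add 1).log (by norm_num)
      simpa using this
    have := hasDerivAt_iff_tendsto_slope.mp hd
    apply this.congr'
    filter_upwards [self_mem_nhdsWithin] with x hx
    simp [slope, Real.log_one, div_eq_inv_mul]
  have hinvslope : Filter.Tendsto (fun x : ℝ => x / Real.log (1 + x))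
      (nhdsWithin 0 {(0:ℝ)}ᶜ) (nhds 1) := by
    have := hslope.inv₀ one_ne_zero
    simp only [inv_div] at this
    simpa using this
  have hexp_bot : Filter.Tendsto Real.exp Filter.atBot (nhdsWithin 0 {(0:ℝ)}ᶜ) := by
    apply tendsto_nhdsWithin_of_tendsto_nhds_of_eventually_within _ Real.tendsto_exp_atBot
    exact Filter.Eventually.of_forall fun x => (Real.exp_pos x).ne'
  have hratio_bot : Filter.Tendsto (fun η : ℝ => Real.exp η / Real.log (1 + Real.exp η))
      Filter.atBot (nhds 1) := hinvslope.comp hexp_bot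
  have hS_bot : Filter.Tendsto S Filter.atBot (nhds 1) := by
    have heq : ∀ η : ℝ, S η =
        (Real.exp η / Real.log (1 + Real.exp η)) * (1 + Real.exp η)⁻¹ := fun η => by
      simp only [S]
      field_simp
    have := hratio_bot.mul (hden_bot.inv₀ one_ne_zero)
    simp only [← heq] at this
    simpa using this
  have hh_bot : Filter.Tendsto h' Filter.atBot (nhds (y : ℝ)) := by
    have := ((tendsto_const_nhds (x := (y:ℝ)) (f := Filter.atBot)).mul hS_bot).sub hf_bot
    simpa using this
  -- atTop
  have hA : Filter.Tendsto (fun η : ℝ => 1 + Real.exp η) Filter.atTop Filter.atTop :=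
    tendsto_atTop_add_const_left _ 1 Real.tendsto_exp_atTop
  have hf_top : Filter.Tendsto (fun η : ℝ => Real.exp η / (1 + Real.exp η))
      Filter.atTop (nhds 1) := by
    have heq : ∀ η : ℝ, Real.exp η / (1 + Real.exp η) = 1 - (1 + Real.exp η)⁻¹ := fun η => by
      field_simp
      ring
    have h2 := (tendsto_const_nhds (x := (1:ℝ)) (f := Filter.atTop)).sub hA.inv_tendsto_atTop
    have h3 : Filter.Tendsto (fun η : ℝ => (1:ℝ) - (1 + Real.exp η)⁻¹) Filter.atTop (nhds 1) := by
      simpa using h2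
    exact h3.congr fun η => (heq η).symm
  have hL_top : Filter.Tendsto (fun η : ℝ => Real.log (1 + Real.exp η)) Filter.atTop
      Filter.atTop := Real.tendsto_log_atTop.comp hA
  have hS_top : Filter.Tendsto S Filter.atTop (nhds 0) := by
    have heq : ∀ η : ℝ, S η = (Real.exp η / (1 + Real.exp η)) *
        (Real.log (1 + Real.exp η))⁻¹ := fun η => by
      simp only [S]
      field_simp
    have h2 := hf_top.mul hL_top.inv_tendsto_atTop
    have h3 : Filter.Tendsto (fun η : ℝ => (Real.exp η / (1 + Real.exp η)) *
        (Real.log (1 + Real.exp η))⁻¹) Filter.atTop (nhds 0) := by simpa using h2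
    exact h3.congr fun η => (heq η).symm
  have hh_top : Filter.Tendsto h' Filter.atTop (nhds (-1)) := by
    have := ((tendsto_const_nhds (x := (y:ℝ)) (f := Filter.atTop)).mul hS_top).sub hf_top
    simpa using this
  refine ⟨hanti, hh_bot, hh_top, ?_⟩
  intro η
  have hub : h' η ≤ (y : ℝ) := by
    refine ge_of_tendsto hh_bot ?_
    filter_upwards [Filter.eventually_lt_atBot η] with ξ hξ
    exact le_of_lt (hanti hξ)
  have hlb : (-1 : ℝ) ≤ h' η := by
    refine le_of_tendsto hh_top ?_
    filter_upwards [Filter.eventually_gt_atTop η] with ξ hξ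
    exact le_of_lt (hanti hξ)
  rw [abs_le]
  constructor
  · have : (1:ℝ) ≤ max 1 (y:ℝ) := le_max_left _ _
    linarith
  · exact hub.trans (le_max_right _ _)
end
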